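/- arXiv:2411.14267 — 10 statements merged into one kernel-verified Lean document; each statement's English description precedes it below -/
import Mathlib

section
/- Let k ≥ 2 and 1 ≤ c ≤ k-1, and let P_1, …, P_k be pairwise coprime integers. For i ∈ [k] define m_i = 2(k+c) · P_i · P_{i+1} ⋯ P_{i+c} (indices taken cyclically modulo k) and L = 2(k+c) · P_1 ⋯ P_k. Then for every subset I ⊆ [k] with |I| ≥ k - c, the least common multiple of {m_i : i ∈ I} equals L. -/
lemma finset_lcm_mul_left {α : Type*} [DecidableEq α] (a : ℕ) (f : α → ℕ)
    (I : Finset α) (hI : I.Nonempty) :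
    I.lcm (fun i => a * f i) = a * I.lcm f := by
  induction hI using Finset.Nonempty.cons_induction with
  | singleton i => simp [Finset.lcm_singleton, normalize_eq]
  | cons i s hi hs ih =>
      rw [Finset.cons_eq_insert, Finset.lcm_insert, Finset.lcm_insert, ih]
      exact Nat.lcm_mul_left _ _ _

/-- For pairwise coprime positive `P₁,…,P_k`, moduli
`m_i = 2(k+c)·P_i⋯P_{i+c}` (cyclic indices) and `L = 2(k+c)·P_1⋯P_k`,
every subset `I` of rows with `|I| ≥ k - c` satisfies `lcm {m_i : i ∈ I} = L`. -/
theorem stmt_0 (k c : ℕ) [NeZero k] (hk : 2 ≤ k) (hc1 : 1 ≤ c) (hc2 : c ≤ k - 1)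
    (P : ZMod k → ℕ) (hPpos : ∀ i, 0 < P i)
    (hP : ∀ i j : ZMod k, i ≠ j → Nat.Coprime (P i) (P j))
    (m : ZMod k → ℕ)
    (hm : ∀ i : ZMod k, m i = 2 * (k + c) * ∏ j ∈ Finset.range (c + 1), P (i + (j : ZMod k)))
    (L : ℕ) (hL : L = 2 * (k + c) * ∏ i : ZMod k, P i)
    (I : Finset (ZMod k)) (hI : k - c ≤ I.card) :
    I.lcm m = L := by
  have hck : c + 1 ≤ k := by omega
  set Q : ZMod k → ℕ := fun i => ∏ j ∈ Finset.range (c + 1), P (i + (j : ZMod k)) with hQ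
  have hIne : I.Nonempty := by
    rw [← Finset.card_pos]; omega
  -- injectivity of natCast on range (c+1)
  have hinj : ∀ j₁ ∈ Finset.range (c + 1), ∀ j₂ ∈ Finset.range (c + 1),
      (j₁ : ZMod k) = (j₂ : ZMod k) → j₁ = j₂ := by
    intro j₁ h₁ j₂ h₂ h
    rw [Finset.mem_range] at h₁ h₂
    have := congrArg ZMod.val h
    rwa [ZMod.val_cast_of_lt (by omega), ZMod.val_cast_of_lt (by omega)] at this
  -- rewrite lcm
  have h1 : I.lcm m = 2 * (k + c) * I.lcm Q := by
    rw [Finset.lcm_congr rfl (fun i _ => hm i)]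
    exact finset_lcm_mul_left _ _ _ hIne
  have h2 : I.lcm Q = ∏ i : ZMod k, P i := by
    apply Nat.dvd_antisymm
    · apply Finset.lcm_dvd
      intro i _
      have : Q i = ∏ t ∈ (Finset.range (c + 1)).image (fun j : ℕ => i + (j : ZMod k)), P t := by
        rw [Finset.prod_image]
        intro j₁ h₁ j₂ h₂ h
        exact hinj j₁ h₁ j₂ h₂ (by simpa using h)
      rw [this]
      exact Finset.prod_dvd_prod_of_subset _ _ _ (Finset.subset_univ _)
    · apply Finset.prod_dvd_of_isRelPrime
      · intro i _ j _ hij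
        exact Nat.coprime_iff_isRelPrime.mp (hP i j hij)
      · intro t _
        -- find i ∈ I and j ≤ c with t = i + j
        set S : Finset (ZMod k) := (Finset.range (c + 1)).image (fun j : ℕ => t - (j : ZMod k))
          with hS
        have hScard : S.card = c + 1 := by
          rw [hS, Finset.card_image_of_injOn, Finset.card_range]
          intro j₁ h₁ j₂ h₂ h
          exact hinj j₁ h₁ j₂ h₂ (sub_right_injective h)
        have hIS : (I ∩ S).Nonempty := by
          by_contra hcon
          rw [Finset.not_nonempty_iff_eq_empty] at hcon
          have hdisj : Disjoint I S := Finset.disjoint_iff_inter_eq_empty.mpr hcon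
          have h' := Finset.card_le_univ (I ∪ S)
          rw [Finset.card_union_of_disjoint hdisj] at h'
          have hk' : Fintype.card (ZMod k) = k := ZMod.card k
          omega
        obtain ⟨i, hi⟩ := hIS
        rw [Finset.mem_inter] at hi
        obtain ⟨hiI, hiS⟩ := hi
        rw [hS, Finset.mem_image] at hiS
        obtain ⟨j, hj, hji⟩ := hiS
        have ht : t = i + (j : ZMod k) := by rw [← hji]; ring
        have hPt : P t ∣ Q i := by
          rw [ht, hQ]
          exact Finset.dvd_prod_of_mem _ hj
        exact hPt.trans (Finset.dvd_lcm hiI)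
  rw [h1, h2, hL]
end

section
/- Let k ≥ 2 and 1 ≤ c ≤ k-1, and let P_1, …, P_k be pairwise coprime positive integers. Define m_i = 2(k+c) · P_i · P_{i+1} ⋯ P_{i+c} with cyclic indices modulo k. Then for every i ∈ [k] and all integers a, b ≥ 1 with a + b ≤ c + 1, the modulus m_i divides lcm( gcd(m_{i-a}, m_{i-a+1}, …, m_i), gcd(m_i, m_{i+1}, …, m_{i+b}) ), where index intervals are cyclic modulo k. -/
/-- With cyclic moduli `m_i = 2(k+c)·P_i⋯P_{i+c}` for pairwise coprime
positive `P`, for all `a, b ≥ 1` with `a + b ≤ c + 1`, `m_i` divides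
`lcm(gcd(m_{i-a},…,m_i), gcd(m_i,…,m_{i+b}))`. -/
theorem stmt_1 (k c : ℕ) [NeZero k] (hk : 2 ≤ k) (hc1 : 1 ≤ c) (hc2 : c ≤ k - 1)
    (P : ZMod k → ℕ) (hPpos : ∀ i, 0 < P i)
    (hP : ∀ i j : ZMod k, i ≠ j → Nat.Coprime (P i) (P j))
    (m : ZMod k → ℕ)
    (hm : ∀ i : ZMod k, m i = 2 * (k + c) * ∏ j ∈ Finset.range (c + 1), P (i + (j : ZMod k)))
    (i : ZMod k) (a b : ℕ) (ha : 1 ≤ a) (hb : 1 ≤ b) (hab : a + b ≤ c + 1) :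
    m i ∣ Nat.lcm
      ((Finset.range (a + 1)).gcd (fun t => m (i - (a : ZMod k) + (t : ZMod k))))
      ((Finset.range (b + 1)).gcd (fun t => m (i + (t : ZMod k)))) := by
  have hkc : c + 1 ≤ k := by omega
  have hac : a ≤ c := by omega
  have hbc : b ≤ c := by omega
  set f : ℕ → ℕ := fun j => P (i + (j : ZMod k)) with hf
  -- coprimality of distinct f-values for small indices
  have hfcop : ∀ j j', j < k → j' < k → j ≠ j' → Nat.Coprime (f j) (f j') := by
    intro j j' hj hj' hne
    apply hP
    intro h
    apply hne
    have h2 : (j : ZMod k) = (j' : ZMod k) := add_left_cancel h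
    have h3 := (ZMod.natCast_eq_natCast_iff _ _ _).mp h2
    simpa [Nat.ModEq, Nat.mod_eq_of_lt hj, Nat.mod_eq_of_lt hj'] using h3
  set X : ℕ := ∏ j ∈ Finset.range b, f j with hX
  set Z : ℕ := ∏ j ∈ Finset.Ico b (c + 1 - a), f j with hZ
  set Y : ℕ := ∏ j ∈ Finset.Ico (c + 1 - a) (c + 1), f j with hY
  set D1 : ℕ := 2 * (k + c) * ∏ j ∈ Finset.range (c + 1 - a), f j with hD1def
  set D2 : ℕ := 2 * (k + c) * ∏ j ∈ Finset.Ico b (c + 1), f j with hD2def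
  have hsplit1 : (∏ j ∈ Finset.range (c + 1 - a), f j) = X * Z := by
    rw [hX, hZ, Finset.range_eq_Ico, Finset.range_eq_Ico]
    exact (Finset.prod_Ico_consecutive f (Nat.zero_le b) (by omega)).symm
  have hsplit2 : (∏ j ∈ Finset.Ico b (c + 1), f j) = Z * Y := by
    rw [hZ, hY, Finset.prod_Ico_consecutive f (by omega) (by omega)]
  have hsplit3 : (∏ j ∈ Finset.range (c + 1), f j) = X * Z * Y := by
    rw [hX, hZ, hY, Finset.range_eq_Ico, Finset.range_eq_Ico,
      Finset.prod_Ico_consecutive f (Nat.zero_le b) (by omega : b ≤ c + 1 - a),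
      Finset.prod_Ico_consecutive f (by omega : (0:ℕ) ≤ c + 1 - a) (by omega)]
  -- Coprime X Y
  have hXY : Nat.Coprime X Y := by
    apply Nat.Coprime.prod_left
    intro j hj
    apply Nat.Coprime.prod_right
    intro j' hj'
    simp only [Finset.mem_range, Finset.mem_Ico] at hj hj'
    exact hfcop j j' (by omega) (by omega) (by omega)
  -- D1 divides the left gcd terms
  have hD1dvd : ∀ t ∈ Finset.range (a + 1),
      D1 ∣ m (i - (a : ZMod k) + (t : ZMod k)) := by
    intro t ht
    simp only [Finset.mem_range] at ht
    have hta : t ≤ a := by omega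
    rw [hm, hD1def]
    apply mul_dvd_mul_left
    have hre : (∏ j ∈ Finset.range (c + 1 - a), f j)
        = ∏ j ∈ Finset.Ico (a - t) (c + 1 - t),
            P (i - (a : ZMod k) + (t : ZMod k) + (j : ZMod k)) := by
      rw [Finset.prod_Ico_eq_prod_range]
      have hlen : c + 1 - t - (a - t) = c + 1 - a := by omega
      rw [hlen]
      apply Finset.prod_congr rfl
      intro j _
      simp only [hf]
      congr 1
      push_cast [Nat.cast_sub hta]
      ring
    rw [hre]
    apply Finset.prod_dvd_prod_of_subset
    intro x hx
    simp only [Finset.mem_Ico] at hx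
    simp only [Finset.mem_range]
    omega
  -- D2 divides the right gcd terms
  have hD2dvd : ∀ t ∈ Finset.range (b + 1),
      D2 ∣ m (i + (t : ZMod k)) := by
    intro t ht
    simp only [Finset.mem_range] at ht
    have htb : t ≤ b := by omega
    rw [hm, hD2def]
    apply mul_dvd_mul_left
    have hre : (∏ j ∈ Finset.Ico b (c + 1), f j)
        = ∏ j ∈ Finset.Ico (b - t) (c + 1 - t),
            P (i + (t : ZMod k) + (j : ZMod k)) := by
      rw [Finset.prod_Ico_eq_prod_range, Finset.prod_Ico_eq_prod_range]
      have hlen : c + 1 - t - (b - t) = c + 1 - b := by omega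
      rw [hlen]
      apply Finset.prod_congr rfl
      intro j _
      simp only [hf]
      congr 1
      push_cast [Nat.cast_sub htb]
      ring
    rw [hre]
    apply Finset.prod_dvd_prod_of_subset
    intro x hx
    simp only [Finset.mem_Ico] at hx
    simp only [Finset.mem_range]
    omega
  -- m i = lcm D1 D2
  have hgcd : Nat.gcd D1 D2 = 2 * (k + c) * Z := by
    rw [hD1def, hD2def, hsplit1, hsplit2]
    have e1 : 2 * (k + c) * (X * Z) = (2 * (k + c) * Z) * X := by ring
    have e2 : 2 * (k + c) * (Z * Y) = (2 * (k + c) * Z) * Y := by ring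
    rw [e1, e2, Nat.gcd_mul_left, hXY.gcd_eq_one, mul_one]
  have hZpos : 0 < Z := Finset.prod_pos fun j _ => hPpos _
  have hKZpos : 0 < 2 * (k + c) * Z := by positivity
  have hmi : m i = Nat.lcm D1 D2 := by
    have hml := Nat.gcd_mul_lcm D1 D2
    rw [hgcd] at hml
    have : 2 * (k + c) * Z * (m i) = 2 * (k + c) * Z * Nat.lcm D1 D2 := by
      rw [hml, hD1def, hD2def, hsplit1, hsplit2, hm, hsplit3]
      ring
    exact Nat.eq_of_mul_eq_mul_left hKZpos this
  rw [hmi]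
  apply Nat.lcm_dvd
  · exact (Finset.dvd_gcd hD1dvd).trans (Nat.dvd_lcm_left _ _)
  · exact (Finset.dvd_gcd hD2dvd).trans (Nat.dvd_lcm_right _ _)
end

section
/- Let F be any CNF formula over Boolean variables, and let F^mon be the CNF obtained from F by replacing every positive literal p with the negative literal ¬p (i.e., negating each positive literal in each clause). Then the number of satisfying assignments of F is at most the number of satisfying assignments of F^mon. -/
section Aux

variable {V : Type} [Fintype V] [DecidableEq V]

private def Sat (G : Finset (Finset (V × Bool))) (σ : V → Bool) : Prop :=
  ∀ C ∈ G, ∃ l ∈ C, σ l.1 = l.2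

private instance (G : Finset (Finset (V × Bool))) : DecidablePred (Sat G) := fun σ => by
  unfold Sat; infer_instance

omit [Fintype V] in
private lemma sat_image (f : Finset (V × Bool) → Finset (V × Bool))
    (G : Finset (Finset (V × Bool))) (σ : V → Bool) :
    Sat (G.image f) σ ↔ ∀ C ∈ G, ∃ l ∈ f C, σ l.1 = l.2 := by
  unfold Sat
  constructor
  · intro h C hC
    exact h _ (Finset.mem_image_of_mem f hC)
  · intro h C hC
    obtain ⟨C0, hC0, rfl⟩ := Finset.mem_image.1 hC
    exact h C0 hC0

private lemma step (v : V) (G : Finset (Finset (V × Bool)))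
    (hG : ∀ C ∈ G, ∀ u : V, ¬ ((u, true) ∈ C ∧ (u, false) ∈ C)) :
    Fintype.card {σ : V → Bool // Sat G σ} ≤
    Fintype.card {σ : V → Bool //
      Sat (G.image (fun C => C.image
        (fun l : V × Bool => if l.1 = v then (l.1, false) else l))) σ} := by
  classical
  set sv : V × Bool → V × Bool := fun l => if l.1 = v then (l.1, false) else l with hsv
  set Q : (V → Bool) → Prop := Sat (G.image (fun C => C.image sv)) with hQdef
  have hQ : ∀ σ : V → Bool,
      Q σ ↔ ∀ C ∈ G, ∃ l ∈ C.image sv, σ l.1 = l.2 := by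
    intro σ
    rw [hQdef]
    exact sat_image _ G σ
  have L2 : ∀ σ : V → Bool, Sat G σ →
      ∀ C ∈ G, ∃ l ∈ C.image sv, (Function.update σ v false) l.1 = l.2 := by
    intro σ hσ C hC
    obtain ⟨l, hl, hσl⟩ := hσ C hC
    by_cases h : l.1 = v
    · exact ⟨(v, false), Finset.mem_image.2 ⟨l, hl, by simp [hsv, h]⟩, by simp⟩
    · exact ⟨l, Finset.mem_image.2 ⟨l, hl, by simp [hsv, h]⟩,
        by simp [Function.update, h, hσl]⟩
  have L1 : ∀ σ : V → Bool, Sat G σ → σ v = false → Q σ := by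
    intro σ hσ hv
    rw [hQ]
    intro C hC
    obtain ⟨l, hl, hσl⟩ := hσ C hC
    by_cases h : l.1 = v
    · exact ⟨(v, false), Finset.mem_image.2 ⟨l, hl, by simp [hsv, h]⟩, hv⟩
    · exact ⟨l, Finset.mem_image.2 ⟨l, hl, by simp [hsv, h]⟩, hσl⟩
  have hvtrue : ∀ σ : V → Bool, Sat G σ → ¬ Q σ → σ v = true := by
    intro σ hσ hnq
    cases hv : σ v with
    | true => rfl
    | false => exact absurd (L1 σ hσ hv) hnq
  -- mixed case is impossible
  have aux : ∀ σ σ' : V → Bool, Sat G σ → Sat G σ' → Q σ → ¬ Q σ' →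
      σ = Function.update σ' v false → False := by
    intro σ σ' hσ hσ' hq hnq' heq
    have hv' : σ' v = true := hvtrue σ' hσ' hnq'
    have hv : σ v = false := by rw [heq]; simp
    rw [hQ] at hnq'
    push_neg at hnq'
    obtain ⟨C0, hC0, hall⟩ := hnq'
    -- every literal of C0 off v is falsified by σ' (and by σ)
    have hoff : ∀ l ∈ C0, l.1 ≠ v → σ' l.1 ≠ l.2 := by
      intro l hl hlv
      have : l ∈ C0.image sv := Finset.mem_image.2 ⟨l, hl, by simp [hsv, hlv]⟩
      exact hall l this
    have hfalse : ((v, false) : V × Bool) ∈ C0 := by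
      obtain ⟨l, hl, hσl⟩ := hσ C0 hC0
      by_cases h : l.1 = v
      · have : l.2 = false := by rw [← hσl, h, hv]
        rw [show l = (v, false) from Prod.ext h this] at hl
        exact hl
      · exfalso
        apply hoff l hl h
        rw [show σ' l.1 = σ l.1 from by rw [heq, Function.update_of_ne h], hσl]
    have htrue : ((v, true) : V × Bool) ∈ C0 := by
      obtain ⟨l, hl, hσl⟩ := hσ' C0 hC0
      by_cases h : l.1 = v
      · have : l.2 = true := by rw [← hσl, h, hv']
        rw [show l = (v, true) from Prod.ext h this] at hl
        exact hl
      · exact absurd hσl (hoff l hl h)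
    exact hG C0 hC0 v ⟨htrue, hfalse⟩
  refine Fintype.card_le_of_injective
    (fun σ => if h : Q σ.1 then ⟨σ.1, h⟩
      else ⟨Function.update σ.1 v false, (hQ _).2 (L2 _ σ.2)⟩) ?_
  rintro ⟨σ, hσ⟩ ⟨σ', hσ'⟩ heq
  by_cases h : Q σ <;> by_cases h' : Q σ' <;>
    simp only [h, h', dif_pos, dif_neg, not_false_iff, Subtype.mk.injEq] at heq
  · exact Subtype.ext heq
  · exact absurd (aux σ σ' hσ hσ' h h' heq) (fun x => x)
  · exact absurd (aux σ' σ hσ' hσ h' h heq.symm) (fun x => x)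
  · have hv : σ v = true := hvtrue σ hσ h
    have hv' : σ' v = true := hvtrue σ' hσ' h'
    apply Subtype.ext
    funext u
    show σ u = σ' u
    by_cases hu : u = v
    · rw [hu, hv, hv']
    · have := congrFun heq u
      rwa [Function.update_of_ne hu, Function.update_of_ne hu] at this

end Aux

/-- Monotonizing a CNF (negating every positive literal, so that the
resulting CNF has only negative literals) does not decrease the number of satisfying
assignments. Clauses are finsets of literals `(v, b)` over pairwise distinct variables. -/
theorem stmt_3 (V : Type) [Fintype V] [DecidableEq V]
    (F : Finset (Finset (V × Bool)))
    (hF : ∀ C ∈ F, ∀ v : V, ¬ ((v, true) ∈ C ∧ (v, false) ∈ C)) :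
    Fintype.card {σ : V → Bool // ∀ C ∈ F, ∃ l ∈ C, σ l.1 = l.2}
      ≤ Fintype.card {σ : V → Bool //
          ∀ C ∈ F, ∃ l ∈ C.image (fun l : V × Bool => (l.1, false)), σ l.1 = l.2} := by
  classical
  -- conflict-freeness is preserved by partial monotonization
  have hconf : ∀ S : Finset V, ∀ C ∈ F.image (fun C => C.image
      (fun l : V × Bool => if l.1 ∈ S then (l.1, false) else l)),
      ∀ u : V, ¬ ((u, true) ∈ C ∧ (u, false) ∈ C) := by
    intro S C hC u ⟨ht, hf⟩
    obtain ⟨C0, hC0, rfl⟩ := Finset.mem_image.1 hC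
    obtain ⟨l, hl, hle⟩ := Finset.mem_image.1 ht
    by_cases hm : l.1 ∈ S
    · simp [hm] at hle
    · simp only [hm, if_neg, if_false] at hle
      subst hle
      obtain ⟨l', hl', hle'⟩ := Finset.mem_image.1 hf
      by_cases hm' : l'.1 ∈ S
      · rw [if_pos hm'] at hle'
        have : l'.1 = u := congrArg Prod.fst hle'
        exact hm (this ▸ hm')
      · rw [if_neg hm'] at hle'
        subst hle'
        exact hF C0 hC0 u ⟨hl, hl'⟩
  have hmain : ∀ S : Finset V,
      Fintype.card {σ : V → Bool // Sat F σ} ≤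
      Fintype.card {σ : V → Bool // Sat (F.image (fun C => C.image
        (fun l : V × Bool => if l.1 ∈ S then (l.1, false) else l))) σ} := by
    intro S
    induction S using Finset.induction_on with
    | empty =>
      apply le_of_eq
      apply Fintype.card_congr
      apply Equiv.subtypeEquivRight
      intro σ
      rw [sat_image]
      simp [Sat]
    | @insert v S hvS ih =>
      refine le_trans ih (le_of_le_of_eq (step v _ (hconf S)) ?_)
      apply Fintype.card_congr
      apply Equiv.subtypeEquivRight
      intro σ
      rw [Finset.image_image]
      have hfun : ((fun C : Finset (V × Bool) => C.image
            (fun l : V × Bool => if l.1 = v then (l.1, false) else l)) ∘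
          (fun C : Finset (V × Bool) => C.image
            (fun l : V × Bool => if l.1 ∈ S then (l.1, false) else l)))
          = fun C : Finset (V × Bool) => C.image
            (fun l : V × Bool => if l.1 ∈ insert v S then (l.1, false) else l) := by
        funext C
        simp only [Function.comp_apply, Finset.image_image]
        congr 1
        funext l
        rcases l with ⟨u, b⟩
        by_cases h1 : u = v
        · subst h1
          by_cases h2 : u ∈ S <;> simp [h2, Finset.mem_insert]
        · by_cases h2 : u ∈ S <;> simp [h1, h2, Finset.mem_insert]
      rw [hfun]
  refine le_trans (le_of_eq ?_) (le_trans (hmain Finset.univ) (le_of_eq ?_))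
  · apply Fintype.card_congr
    apply Equiv.subtypeEquivRight
    intro σ
    exact Iff.rfl
  · apply Fintype.card_congr
    apply Equiv.subtypeEquivRight
    intro σ
    rw [sat_image]
    have hfn : (fun l : V × Bool => if l.1 ∈ Finset.univ then (l.1, false) else l)
        = fun l : V × Bool => (l.1, false) := by
      funext l; simp
    rw [hfn]
end

section
/- Let S_1, …, S_l be subsets of a finite set U, each of size r ≥ 1, such that the sequence is κ-spread: for every W ⊆ U, |{i ∈ [l] : W ⊆ S_i}| ≤ l · κ^{-|W|}. Let p ∈ (0,1) and let W be a random subset of U obtained by including each element independently with probability p. If pκ ≥ (r-1)/ln 2, then the probability that no S_i is contained in W is at most exp(-pκ/(2r)). -/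
open Finset Real Filter
set_option linter.unusedSectionVars false
set_option linter.unusedVariables false
set_option linter.unnecessarySeqFocus false
set_option maxHeartbeats 1000000
namespace Stmt5
variable {U : Type} [Fintype U] [DecidableEq U]

noncomputable def Ex (η : U → ℝ) (s : Finset U) (G : Finset U → ℝ) : ℝ :=
  ∑ A ∈ s.powerset, ((∏ u ∈ A, η u) * ∏ u ∈ s \ A, (1 - η u)) * G A

lemma Ex_empty (η : U → ℝ) (G : Finset U → ℝ) : Ex η ∅ G = G ∅ := by
  simp [Ex]

lemma Ex_insert {a : U} {s : Finset U} (ha : a ∉ s) (η : U → ℝ) (G : Finset U → ℝ) :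
    Ex η (insert a s) G
      = (1 - η a) * Ex η s G + η a * Ex η s (fun A => G (insert a A)) := by
  unfold Ex
  rw [Finset.sum_powerset_insert ha, Finset.mul_sum, Finset.mul_sum]
  congr 1
  · refine Finset.sum_congr rfl fun A hA => ?_
    have hAs : A ⊆ s := Finset.mem_powerset.mp hA
    have haA : a ∉ A := fun h => ha (hAs h)
    have h1 : insert a s \ A = insert a (s \ A) := by
      rw [Finset.insert_sdiff_of_notMem _ haA]
    have h2 : a ∉ s \ A := by simp [ha]
    rw [h1, Finset.prod_insert h2]
    ring
  · refine Finset.sum_congr rfl fun A hA => ?_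
    have hAs : A ⊆ s := Finset.mem_powerset.mp hA
    have haA : a ∉ A := fun h => ha (hAs h)
    have h1 : insert a s \ insert a A = s \ A := by
      ext x
      simp only [Finset.mem_sdiff, Finset.mem_insert]
      constructor
      · rintro ⟨hx1 | hx1, hx2⟩
        · exact absurd (Or.inl hx1) hx2
        · exact ⟨hx1, fun hxA => hx2 (Or.inr hxA)⟩
      · rintro ⟨hx1, hx2⟩
        exact ⟨Or.inr hx1, by rintro (rfl | h) <;> [exact ha hx1; exact hx2 h]⟩
    rw [h1, Finset.prod_insert haA]
    ring

lemma Ex_one (η : U → ℝ) (s : Finset U) : Ex η s (fun _ => (1 : ℝ)) = 1 := by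
  induction s using Finset.induction_on with
  | empty => simp [Ex_empty]
  | insert _ _ ha ih => rw [Ex_insert ha]; rw [ih]; ring

lemma weight_nonneg {η : U → ℝ} (hη0 : ∀ u, 0 ≤ η u) (hη1 : ∀ u, η u ≤ 1)
    (s A : Finset U) : 0 ≤ (∏ u ∈ A, η u) * ∏ u ∈ s \ A, (1 - η u) := by
  apply mul_nonneg
  · exact Finset.prod_nonneg fun u _ => hη0 u
  · exact Finset.prod_nonneg fun u _ => by linarith [hη1 u]

lemma Ex_mono {η : U → ℝ} (hη0 : ∀ u, 0 ≤ η u) (hη1 : ∀ u, η u ≤ 1)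
    (s : Finset U) {G H : Finset U → ℝ} (h : ∀ A, G A ≤ H A) :
    Ex η s G ≤ Ex η s H := by
  refine Finset.sum_le_sum fun A _ => ?_
  exact mul_le_mul_of_nonneg_left (h A) (weight_nonneg hη0 hη1 s A)

lemma Ex_nonneg {η : U → ℝ} (hη0 : ∀ u, 0 ≤ η u) (hη1 : ∀ u, η u ≤ 1)
    (s : Finset U) {G : Finset U → ℝ} (h : ∀ A, 0 ≤ G A) : 0 ≤ Ex η s G := by
  have := Ex_mono hη0 hη1 s h
  rwa [show (fun _ : Finset U => (0:ℝ)) = fun _ => (0:ℝ) from rfl, show Ex η s (fun _ => (0:ℝ)) = 0 by simp [Ex]] at this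

lemma Ex_sum (η : U → ℝ) (s : Finset U) {ι : Type*} (t : Finset ι) (F : ι → Finset U → ℝ) :
    Ex η s (fun A => ∑ j ∈ t, F j A) = ∑ j ∈ t, Ex η s (F j) := by
  unfold Ex
  rw [Finset.sum_comm]
  exact Finset.sum_congr rfl fun A _ => by rw [Finset.mul_sum]

lemma harris {η : U → ℝ} (hη0 : ∀ u, 0 ≤ η u) (hη1 : ∀ u, η u ≤ 1)
    (s : Finset U) (G H : Finset U → ℝ)
    (hG : ∀ A B, A ⊆ B → G A ≤ G B) (hH : ∀ A B, A ⊆ B → H A ≤ H B) :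
    Ex η s G * Ex η s H ≤ Ex η s (fun A => G A * H A) := by
  induction s using Finset.induction_on generalizing G H with
  | empty => simp [Ex]
  | @insert a s ha ih =>
    rw [Ex_insert ha, Ex_insert ha, Ex_insert ha]
    set c := η a with hc
    have hc0 : 0 ≤ c := hη0 a
    have hc1 : c ≤ 1 := hη1 a
    set g0 := Ex η s G with hg0
    set g1 := Ex η s (fun A => G (insert a A)) with hg1
    set h0 := Ex η s H with hh0
    set h1 := Ex η s (fun A => H (insert a A)) with hh1
    have i00 : g0 * h0 ≤ Ex η s (fun A => G A * H A) := ih G H hG hH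
    have i11 : g1 * h1 ≤ Ex η s (fun A => G (insert a A) * H (insert a A)) :=
      ih _ _ (fun A B hAB => hG _ _ (Finset.insert_subset_insert a hAB))
        (fun A B hAB => hH _ _ (Finset.insert_subset_insert a hAB))
    have hg01 : g0 ≤ g1 :=
      Ex_mono hη0 hη1 s fun A => hG A (insert a A) (Finset.subset_insert a A)
    have hh01 : h0 ≤ h1 :=
      Ex_mono hη0 hη1 s fun A => hH A (insert a A) (Finset.subset_insert a A)
    have key : 0 ≤ c * (1 - c) * ((g1 - g0) * (h1 - h0)) := by
      apply mul_nonneg (mul_nonneg hc0 (by linarith)) <;>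
      exact mul_nonneg (by linarith) (by linarith)
    nlinarith [i00, i11, key, mul_le_mul_of_nonneg_left i00 (show (0:ℝ) ≤ 1 - c by linarith),
      mul_le_mul_of_nonneg_left i11 hc0]

lemma harris_anti {η : U → ℝ} (hη0 : ∀ u, 0 ≤ η u) (hη1 : ∀ u, η u ≤ 1)
    (s : Finset U) (G H : Finset U → ℝ)
    (hG : ∀ A B, A ⊆ B → G B ≤ G A) (hH : ∀ A B, A ⊆ B → H B ≤ H A) :
    Ex η s G * Ex η s H ≤ Ex η s (fun A => G A * H A) := by
  have := harris hη0 hη1 s (fun A => -G A) (fun A => -H A)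
    (fun A B hAB => by simpa using hG A B hAB) (fun A B hAB => by simpa using hH A B hAB)
  have e1 : Ex η s (fun A => -G A) = -Ex η s G := by
    unfold Ex; rw [← Finset.sum_neg_distrib]; exact Finset.sum_congr rfl fun A _ => by ring
  have e2 : Ex η s (fun A => -H A) = -Ex η s H := by
    unfold Ex; rw [← Finset.sum_neg_distrib]; exact Finset.sum_congr rfl fun A _ => by ring
  have e3 : Ex η s (fun A => -G A * -H A) = Ex η s (fun A => G A * H A) := by
    unfold Ex; exact Finset.sum_congr rfl fun A _ => by ring
  rw [e1, e2, e3] at this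
  linarith [this]

lemma jensen_exp {η : U → ℝ} (hη0 : ∀ u, 0 ≤ η u) (hη1 : ∀ u, η u ≤ 1)
    (s : Finset U) (G : Finset U → ℝ) :
    Real.exp (Ex η s G) ≤ Ex η s (fun A => Real.exp (G A)) := by
  have hw : ∀ A ∈ s.powerset, 0 ≤ (∏ u ∈ A, η u) * ∏ u ∈ s \ A, (1 - η u) := by
    intro A _
    apply mul_nonneg (Finset.prod_nonneg fun u _ => hη0 u)
      (Finset.prod_nonneg fun u _ => by linarith [hη1 u])
  have h1 : ∑ A ∈ s.powerset, (∏ u ∈ A, η u) * ∏ u ∈ s \ A, (1 - η u) = 1 := by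
    have := Ex_one η s; unfold Ex at this; simpa using this
  have := convexOn_exp.map_sum_le (t := s.powerset)
    (w := fun A => (∏ u ∈ A, η u) * ∏ u ∈ s \ A, (1 - η u)) (p := G) hw h1
    (fun A _ => Set.mem_univ _)
  simpa [Ex, smul_eq_mul] using this

lemma factor (p : ℝ) (T : Finset U) (G : Finset U → ℝ) :
    Ex (fun _ => p) univ (fun A => (if T ⊆ A then (1:ℝ) else 0) * G A)
      = p ^ T.card * Ex (fun u => if u ∈ T then 1 else p) univ G := by
  unfold Ex
  rw [Finset.mul_sum]
  refine Finset.sum_congr rfl fun A hA => ?_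
  by_cases hT : T ⊆ A
  · have h1 : (∏ u ∈ A, (if u ∈ T then (1:ℝ) else p)) = p ^ (A.card - T.card) := by
      rw [Finset.prod_ite]
      have e1 : A.filter (fun u => u ∈ T) = T := by
        ext x; simp only [Finset.mem_filter]
        exact ⟨fun h => h.2, fun h => ⟨hT h, h⟩⟩
      have e2 : A.filter (fun u => ¬ u ∈ T) = A \ T := by
        ext x; simp [Finset.mem_sdiff]
      rw [e1, e2]
      simp [Finset.prod_const, Finset.card_sdiff_of_subset hT]
    have h2 : (∏ u ∈ univ \ A, (1 - (if u ∈ T then (1:ℝ) else p))) =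
        ∏ u ∈ univ \ A, (1 - p) := by
      refine Finset.prod_congr rfl fun u hu => ?_
      have : u ∉ T := fun h => by
        have := hT h; simp [Finset.mem_sdiff, this] at hu
      simp [this]
    simp only []
    rw [if_pos hT, h1, h2]
    have h3 : (∏ u ∈ A, p) = p ^ A.card := Finset.prod_const p
    rw [h3]
    have h4 : p ^ T.card * p ^ (A.card - T.card) = p ^ A.card := by
      rw [← pow_add, Nat.add_sub_cancel' (Finset.card_le_card hT)]
    rw [← h4]
    ring
  · obtain ⟨x, hxT, hxA⟩ := Finset.not_subset.mp hT
    have hx : x ∈ univ \ A := by simp [hxA]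
    have h0 : (∏ u ∈ univ \ A, (1 - (if u ∈ T then (1:ℝ) else p))) = 0 :=
      Finset.prod_eq_zero hx (by simp [hxT])
    simp only []
    rw [if_neg hT, h0]
    ring

lemma Ex_congr_eta {η η' : U → ℝ} (s : Finset U) (h : ∀ u ∈ s, η u = η' u)
    (G : Finset U → ℝ) : Ex η s G = Ex η' s G := by
  unfold Ex
  refine Finset.sum_congr rfl fun A hA => ?_
  have hAs := Finset.mem_powerset.mp hA
  congr 1
  congr 1
  · exact Finset.prod_congr rfl fun u hu => h u (hAs hu)
  · exact Finset.prod_congr rfl fun u hu => by rw [h u (Finset.mem_sdiff.mp hu).1]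

lemma Ex_ignore {a : U} {s : Finset U} (ha : a ∉ s) (η : U → ℝ) (G : Finset U → ℝ)
    (hG : ∀ A, G (insert a A) = G A) :
    Ex η (insert a s) G = Ex η s G := by
  rw [Ex_insert ha]
  have : Ex η s (fun A => G (insert a A)) = Ex η s G := by
    unfold Ex; exact Finset.sum_congr rfl fun A _ => by simp only []; rw [hG]
  rw [this]; ring

lemma Ex_ignore_union (η : U → ℝ) (G : Finset U → ℝ) (T s : Finset U)
    (hd : Disjoint T s) (hG : ∀ u ∈ T, ∀ A, G (insert u A) = G A) :
    Ex η (s ∪ T) G = Ex η s G := by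
  induction T using Finset.induction_on with
  | empty => simp
  | @insert a T ha ih =>
    have hd' : Disjoint T s := (Finset.disjoint_insert_left.mp hd).2
    have haS : a ∉ s := fun h => (Finset.disjoint_insert_left.mp hd).1 h
    have haT : a ∉ s ∪ T := by simp [haS, ha]
    have : s ∪ insert a T = insert a (s ∪ T) := by
      ext x; simp only [Finset.mem_insert, Finset.mem_union]; tauto
    rw [this, Ex_ignore haT η G (hG a (Finset.mem_insert_self a T)),
      ih hd' (fun u hu A => hG u (Finset.mem_insert_of_mem hu) A)]

noncomputable def Ind (T A : Finset U) : ℝ := if T ⊆ A then 1 else 0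

lemma Ind_nonneg (T A : Finset U) : 0 ≤ Ind T A := by unfold Ind; positivity

lemma Ind_mono (T : Finset U) {A B : Finset U} (h : A ⊆ B) : Ind T A ≤ Ind T B := by
  unfold Ind
  by_cases hT : T ⊆ A
  · rw [if_pos hT, if_pos (hT.trans h)]
  · rw [if_neg hT]; positivity

lemma Ex_const_mul (η : U → ℝ) (s : Finset U) (c : ℝ) (G : Finset U → ℝ) :
    Ex η s (fun A => c * G A) = c * Ex η s G := by
  unfold Ex; rw [Finset.mul_sum]; exact Finset.sum_congr rfl fun A _ => by ring

section main1
variable {l r : ℕ} {S : Fin l → Finset U} {κ p : ℝ}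

lemma ex_ind_pair (p : ℝ) (T T' : Finset U) :
    p ^ T.card * Ex (fun u => if u ∈ T then 1 else p) univ (Ind T')
      = p ^ (T ∪ T').card := by
  rw [← factor]
  have : (fun A => (if T ⊆ A then (1:ℝ) else 0) * Ind T' A)
      = fun A => (if T ∪ T' ⊆ A then (1:ℝ) else 0) * (fun _ => (1:ℝ)) A := by
    funext A
    simp only [Ind, Finset.union_subset_iff]
    by_cases h1 : T ⊆ A <;> by_cases h2 : T' ⊆ A <;> simp [h1, h2]
  rw [this, factor, Ex_one, mul_one]

lemma claimC (hr : 1 ≤ r) (hcard : ∀ i, (S i).card = r) (hκ : 1 ≤ κ)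
    (hspread : ∀ W : Finset U,
      ((Finset.univ.filter fun i : Fin l => W ⊆ S i).card : ℝ) ≤ (l : ℝ) / κ ^ W.card)
    (hp0 : 0 < p) (hp1 : p < 1) (i : Fin l) :
    Ex (fun u => if u ∈ S i then 1 else p) univ
        (fun A => ∑ j ∈ univ.filter (fun j : Fin l => ¬ Disjoint (S j) (S i)), Ind (S j) A)
      ≤ (l : ℝ) * p ^ r * ((1 + 1/(p*κ))^r - 1) := by
  have hκ0 : (0:ℝ) < κ := lt_of_lt_of_le one_pos hκ
  set J := univ.filter (fun j : Fin l => ¬ Disjoint (S j) (S i)) with hJ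
  rw [Ex_sum]
  -- multiply by p^r
  have hpr : (0:ℝ) < p ^ r := pow_pos hp0 r
  rw [← mul_le_mul_iff_right₀ hpr, Finset.mul_sum]
  have hterm : ∀ j ∈ J, p ^ r * Ex (fun u => if u ∈ S i then 1 else p) univ (Ind (S j))
      = p ^ (2*r - (S i ∩ S j).card) := by
    intro j hj
    have := ex_ind_pair p (S i) (S j)
    rw [hcard i] at this
    rw [this]
    congr 1
    have h1 := Finset.card_union_add_card_inter (S i) (S j)
    rw [hcard i, hcard j] at h1
    omega
  rw [Finset.sum_congr rfl hterm]
  -- the fiber decomposition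
  set P := (S i).powerset.filter (fun W => W.Nonempty) with hP
  have hfiber : ∀ j ∈ J, S i ∩ S j ∈ P := by
    intro j hj
    rw [hP, Finset.mem_filter, Finset.mem_powerset]
    refine ⟨Finset.inter_subset_left, ?_⟩
    rw [hJ, Finset.mem_filter] at hj
    rw [Finset.inter_comm]
    exact Finset.not_disjoint_iff_nonempty_inter.mp hj.2
  have step1 : ∑ j ∈ J, p ^ (2*r - (S i ∩ S j).card)
      = ∑ W ∈ P, ((J.filter (fun j => S i ∩ S j = W)).card : ℝ) * p ^ (2*r - W.card) := by
    rw [← Finset.sum_fiberwise_of_maps_to' hfiber (fun W => p ^ (2*r - W.card))]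
    refine Finset.sum_congr rfl fun W _ => ?_
    rw [Finset.sum_const, nsmul_eq_mul]
  rw [step1]
  have step2 : ∑ W ∈ P, ((J.filter (fun j => S i ∩ S j = W)).card : ℝ) * p ^ (2*r - W.card)
      ≤ ∑ W ∈ P, ((l:ℝ) / κ ^ W.card) * p ^ (2*r - W.card) := by
    refine Finset.sum_le_sum fun W hW => ?_
    refine mul_le_mul_of_nonneg_right ?_ (by positivity)
    refine le_trans ?_ (hspread W)
    have hsub : J.filter (fun j => S i ∩ S j = W) ⊆ univ.filter (fun j => W ⊆ S j) := by
      intro j hj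
      rw [Finset.mem_filter] at hj ⊢
      exact ⟨Finset.mem_univ j, hj.2 ▸ Finset.inter_subset_right⟩
    exact_mod_cast Nat.cast_le.mpr (Finset.card_le_card hsub)
  refine le_trans step2 ?_
  -- evaluate the sum over nonempty subsets of S i
  have hval : ∀ W ∈ (S i).powerset, ((l:ℝ) / κ ^ W.card) * p ^ (2*r - W.card)
      = (l:ℝ) * p^(2*r) * (1/(p*κ))^W.card := by
    intro W hW
    have hWr : W.card ≤ r := by
      rw [← hcard i]; exact Finset.card_le_card (Finset.mem_powerset.mp hW)
    have h2 : p ^ (2*r - W.card) = p^(2*r) / p^W.card := by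
      rw [eq_div_iff (by positivity), ← pow_add]
      congr 1; omega
    have h3 : (1/(p*κ))^W.card = 1/(p^W.card * κ^W.card) := by
      rw [div_pow, one_pow, mul_pow]
    rw [h2, h3, div_mul_div_comm, mul_one_div, mul_comm (κ ^ W.card) (p ^ W.card)]
  have hsplit : ∑ W ∈ (S i).powerset, ((l:ℝ) / κ ^ W.card) * p ^ (2*r - W.card)
      = (∑ W ∈ P, ((l:ℝ) / κ ^ W.card) * p ^ (2*r - W.card)) + (l:ℝ) * p^(2*r) := by
    rw [← Finset.sum_filter_add_sum_filter_not (S i).powerset (fun W => W.Nonempty), ← hP]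
    congr 1
    have : (S i).powerset.filter (fun W => ¬ W.Nonempty) = {∅} := by
      ext W
      simp only [Finset.mem_filter, Finset.mem_powerset, Finset.not_nonempty_iff_eq_empty,
        Finset.mem_singleton]
      exact ⟨fun h => h.2, fun h => ⟨h ▸ Finset.empty_subset _, h⟩⟩
    rw [this, Finset.sum_singleton]
    simp
  have hsum : ∑ W ∈ (S i).powerset, ((l:ℝ) / κ ^ W.card) * p ^ (2*r - W.card)
      = (l:ℝ) * p^(2*r) * (1 + 1/(p*κ))^r := by
    have hpow : ∑ W ∈ (S i).powerset, (1/(p*κ))^W.card = (1 + 1/(p*κ))^r := by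
      have h := Finset.prod_add (fun _ : U => (1/(p*κ))) (fun _ : U => (1:ℝ)) (S i)
      simp only [Finset.prod_const, one_pow, mul_one] at h
      rw [← hcard i, add_comm (1:ℝ) (1/(p*κ))]
      exact h.symm
    rw [Finset.sum_congr rfl hval, ← Finset.mul_sum, hpow]
  have : ∑ W ∈ P, ((l:ℝ) / κ ^ W.card) * p ^ (2*r - W.card)
      = (l:ℝ) * p^(2*r) * ((1 + 1/(p*κ))^r - 1) := by
    have := hsplit
    rw [hsum] at this
    linarith
  rw [this]
  have : (l:ℝ) * p^(2*r) * ((1 + 1/(p*κ))^r - 1) = p^r * ((l:ℝ) * p ^ r * ((1 + 1/(p*κ))^r - 1)) := by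
    rw [two_mul, pow_add]; ring
  rw [this]

noncomputable def NN (S : Fin l → Finset U) (A : Finset U) : ℝ := ∑ i : Fin l, Ind (S i) A

lemma diffineq (hl : 1 ≤ l) (hr : 1 ≤ r) (hcard : ∀ i, (S i).card = r) (hκ : 1 ≤ κ)
    (hspread : ∀ W : Finset U,
      ((Finset.univ.filter fun i : Fin l => W ⊆ S i).card : ℝ) ≤ (l : ℝ) / κ ^ W.card)
    (hp0 : 0 < p) (hp1 : p < 1) {t : ℝ} (ht : 0 ≤ t) :
    (l : ℝ) * p ^ r * Real.exp (-(t * ((l : ℝ) * p ^ r * ((1 + 1/(p*κ))^r - 1))))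
        * Ex (fun _ => p) univ (fun A => Real.exp (-(t * NN S A)))
      ≤ Ex (fun _ => p) univ (fun A => NN S A * Real.exp (-(t * NN S A))) := by
  set η₀ : U → ℝ := fun _ => p with hη₀
  have hη₀0 : ∀ u, 0 ≤ η₀ u := fun u => le_of_lt hp0
  have hη₀1 : ∀ u, η₀ u ≤ 1 := fun u => le_of_lt hp1
  set b : ℝ := (l : ℝ) * p ^ r * ((1 + 1/(p*κ))^r - 1) with hb
  set ψ : ℝ := Ex η₀ univ (fun A => Real.exp (-(t * NN S A))) with hψ
  -- step 1: expand NN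
  have e1 : Ex η₀ univ (fun A => NN S A * Real.exp (-(t * NN S A)))
      = ∑ i : Fin l, Ex η₀ univ (fun A => Ind (S i) A * Real.exp (-(t * NN S A))) := by
    rw [← Ex_sum]
    unfold Ex
    refine Finset.sum_congr rfl fun A _ => ?_
    simp only [NN]
    rw [Finset.sum_mul]
  rw [e1]
  -- step 2: per-i lower bound
  have e2 : ∀ i : Fin l, p ^ r * Real.exp (-(t*b)) * ψ
      ≤ Ex η₀ univ (fun A => Ind (S i) A * Real.exp (-(t * NN S A))) := by
    intro i
    set ηi : U → ℝ := fun u => if u ∈ S i then 1 else p with hηi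
    have hηi0 : ∀ u, 0 ≤ ηi u := by
      intro u; by_cases h : u ∈ S i <;> simp [hηi, h] <;> linarith
    have hηi1 : ∀ u, ηi u ≤ 1 := by
      intro u; by_cases h : u ∈ S i <;> simp [hηi, h] <;> linarith
    -- factorization
    have f1 : Ex η₀ univ (fun A => Ind (S i) A * Real.exp (-(t * NN S A)))
        = p ^ r * Ex ηi univ (fun A => Real.exp (-(t * NN S A))) := by
      rw [← hcard i]
      exact factor p (S i) _
    rw [f1]
    rw [mul_assoc]
    refine mul_le_mul_of_nonneg_left ?_ (le_of_lt (pow_pos hp0 r))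
    -- split NN = Y + Z
    set J := univ.filter (fun j : Fin l => ¬ Disjoint (S j) (S i)) with hJdef
    set Y : Finset U → ℝ := fun A => ∑ j ∈ J, Ind (S j) A with hY
    set Z : Finset U → ℝ := fun A => ∑ j ∈ Jᶜ, Ind (S j) A with hZ
    have hNNsplit : ∀ A, NN S A = Y A + Z A := by
      intro A
      rw [hY, hZ]
      simp only [NN]
      rw [← Finset.sum_add_sum_compl J]
    have hYmono : ∀ A B : Finset U, A ⊆ B → Y A ≤ Y B := fun A B h =>
      Finset.sum_le_sum fun j _ => Ind_mono (S j) h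
    have hZmono : ∀ A B : Finset U, A ⊆ B → Z A ≤ Z B := fun A B h =>
      Finset.sum_le_sum fun j _ => Ind_mono (S j) h
    have hYnn : ∀ A, 0 ≤ Y A := fun A => Finset.sum_nonneg fun j _ => Ind_nonneg _ _
    have hZnn : ∀ A, 0 ≤ Z A := fun A => Finset.sum_nonneg fun j _ => Ind_nonneg _ _
    -- Harris
    have h1 : Ex ηi univ (fun A => Real.exp (-(t * Y A)))
          * Ex ηi univ (fun A => Real.exp (-(t * Z A)))
        ≤ Ex ηi univ (fun A => Real.exp (-(t * NN S A))) := by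
      have := harris_anti hηi0 hηi1 univ
        (fun A => Real.exp (-(t * Y A))) (fun A => Real.exp (-(t * Z A)))
        (fun A B hAB => Real.exp_le_exp.mpr (by
          have := hYmono A B hAB; nlinarith))
        (fun A B hAB => Real.exp_le_exp.mpr (by
          have := hZmono A B hAB; nlinarith))
      refine le_trans this (le_of_eq ?_)
      unfold Ex
      refine Finset.sum_congr rfl fun A _ => ?_
      simp only []
      rw [← Real.exp_add, hNNsplit A]
      ring_nf
    -- Jensen on Y
    have h2 : Real.exp (-(t*b)) ≤ Ex ηi univ (fun A => Real.exp (-(t * Y A))) := by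
      have hj := jensen_exp hηi0 hηi1 univ (fun A => -(t * Y A))
      have hEx : Ex ηi univ (fun A => -(t * Y A)) = -t * Ex ηi univ Y := by
        rw [← Ex_const_mul]
        unfold Ex; exact Finset.sum_congr rfl fun A _ => by ring
      have hC : Ex ηi univ Y ≤ b := by
        rw [hb, hY]
        exact claimC hr hcard hκ hspread hp0 hp1 i
      refine le_trans ?_ hj
      rw [hEx]
      apply Real.exp_le_exp.mpr
      nlinarith
    -- Z is independent of coordinates in S i
    have h3 : Ex ηi univ (fun A => Real.exp (-(t * Z A)))
        = Ex η₀ univ (fun A => Real.exp (-(t * Z A))) := by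
      have hZins : ∀ u ∈ S i, ∀ A, Z (insert u A) = Z A := by
        intro u hu A
        rw [hZ]
        refine Finset.sum_congr rfl fun j hj => ?_
        have hdisj : Disjoint (S j) (S i) := by
          rw [hJdef] at hj
          simp only [Finset.mem_compl, Finset.mem_filter, Finset.mem_univ, true_and,
            not_not] at hj
          exact hj
        have hu' : u ∉ S j := fun h => (Finset.disjoint_left.mp hdisj h) hu
        unfold Ind
        congr 1
        simp only [eq_iff_iff]
        constructor
        · intro hsub x hx
          have := hsub hx
          rw [Finset.mem_insert] at this
          rcases this with rfl | h
          · exact absurd hx hu'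
          · exact h
        · exact fun hsub => hsub.trans (Finset.subset_insert u A)
      have huniv : (univ \ S i) ∪ S i = (univ : Finset U) := by
        rw [Finset.sdiff_union_of_subset (Finset.subset_univ _)]
      have hd : Disjoint (S i) (univ \ S i) := Finset.disjoint_sdiff
      have hGins : ∀ u ∈ S i, ∀ A, Real.exp (-(t * Z (insert u A))) = Real.exp (-(t * Z A)) :=
        fun u hu A => by rw [hZins u hu A]
      calc Ex ηi univ (fun A => Real.exp (-(t * Z A)))
          = Ex ηi ((univ \ S i) ∪ S i) (fun A => Real.exp (-(t * Z A))) := by rw [huniv]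
        _ = Ex ηi (univ \ S i) (fun A => Real.exp (-(t * Z A))) :=
            Ex_ignore_union ηi _ (S i) (univ \ S i) hd hGins
        _ = Ex η₀ (univ \ S i) (fun A => Real.exp (-(t * Z A))) := by
            refine Ex_congr_eta _ (fun u hu => ?_) _
            have : u ∉ S i := (Finset.mem_sdiff.mp hu).2
            simp [hηi, hη₀, this]
        _ = Ex η₀ ((univ \ S i) ∪ S i) (fun A => Real.exp (-(t * Z A))) :=
            (Ex_ignore_union η₀ _ (S i) (univ \ S i) hd hGins).symm
        _ = Ex η₀ univ (fun A => Real.exp (-(t * Z A))) := by rw [huniv]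
    -- combine
    have h4 : ψ ≤ Ex η₀ univ (fun A => Real.exp (-(t * Z A))) := by
      rw [hψ]
      refine Ex_mono hη₀0 hη₀1 univ fun A => ?_
      apply Real.exp_le_exp.mpr
      have := hYnn A
      have := hNNsplit A
      nlinarith
    have h5 : 0 ≤ ψ := by
      rw [hψ]
      exact Ex_nonneg hη₀0 hη₀1 univ fun A => (Real.exp_pos _).le
    have h6 : 0 ≤ Ex ηi univ (fun A => Real.exp (-(t * Y A))) :=
      le_trans (Real.exp_pos _).le h2
    calc Real.exp (-(t*b)) * ψ
        ≤ Ex ηi univ (fun A => Real.exp (-(t * Y A)))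
            * Ex ηi univ (fun A => Real.exp (-(t * Z A))) := by
          refine mul_le_mul h2 ?_ h5 h6
          rw [h3]; exact h4
      _ ≤ Ex ηi univ (fun A => Real.exp (-(t * NN S A))) := h1
  -- sum over i
  have := Finset.sum_le_sum (fun i (_ : i ∈ (univ : Finset (Fin l))) => e2 i)
  rw [Finset.sum_const, Finset.card_univ, Fintype.card_fin, nsmul_eq_mul] at this
  calc (l : ℝ) * p ^ r * Real.exp (-(t*b)) * ψ
      = (l:ℝ) * (p ^ r * Real.exp (-(t*b)) * ψ) := by ring
    _ ≤ _ := this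

end main1

lemma NN_nonneg {l : ℕ} (S : Fin l → Finset U) (A : Finset U) : 0 ≤ NN S A := by
  unfold NN Ind; positivity

lemma aux_pow (x : ℝ) (hx : 0 ≤ x) : ∀ m : ℕ, (1+x)^(m+1) ≤ 1 + ((m:ℝ)+1)*x*(1+x)^m := by
  intro m
  induction m with
  | zero => simp
  | succ m ih =>
    have h1 : (0:ℝ) ≤ 1 + x := by linarith
    have h2 : (1:ℝ) ≤ (1+x)^(m+1) := one_le_pow₀ (by linarith)
    have step1 : (1+x) * ((1+x)^(m+1) - 1) ≤ (1+x) * (((m:ℝ)+1)*x*(1+x)^m) :=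
      mul_le_mul_of_nonneg_left (by linarith [ih]) h1
    have id1 : (1+x) * ((1+x)^(m+1) - 1) = (1+x)^(m+1+1) - 1 - x := by ring
    have id2 : (1+x) * (((m:ℝ)+1)*x*(1+x)^m) = ((m:ℝ)+1)*(x*(1+x)^(m+1)) := by ring
    have hx2 : x * 1 ≤ x*(1+x)^(m+1) := mul_le_mul_of_nonneg_left h2 hx
    rw [id1, id2] at step1
    push_cast
    nlinarith [step1, hx2]

section main2
variable {l r : ℕ} {S : Fin l → Finset U} {κ p : ℝ}

lemma mainbound (hl : 1 ≤ l) (hr : 1 ≤ r) (hcard : ∀ i, (S i).card = r) (hκ : 1 ≤ κ)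
    (hspread : ∀ W : Finset U,
      ((Finset.univ.filter fun i : Fin l => W ⊆ S i).card : ℝ) ≤ (l : ℝ) / κ ^ W.card)
    (hp0 : 0 < p) (hp1 : p < 1)
    (hpκ : ((r : ℝ) - 1) / Real.log 2 ≤ p * κ) :
    Ex (fun _ => p) univ (fun A => if ∀ i : Fin l, ¬ S i ⊆ A then (1:ℝ) else 0)
      ≤ Real.exp (-(p * κ) / (2 * r)) := by
  have hη₀0 : ∀ u : U, 0 ≤ (fun _ => p) u := fun u => le_of_lt hp0
  have hη₀1 : ∀ u : U, (fun _ => p) u ≤ 1 := fun u => le_of_lt hp1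
  have hq0 : 0 < p * κ := mul_pos hp0 (lt_of_lt_of_le one_pos hκ)
  set x : ℝ := 1/(p*κ) with hxdef
  have hx0 : 0 < x := by positivity
  set μ : ℝ := (l:ℝ) * p ^ r with hμdef
  have hμ0 : 0 < μ := by
    rw [hμdef]
    have : (1:ℝ) ≤ (l:ℝ) := by exact_mod_cast hl
    have hpr : 0 < p ^ r := pow_pos hp0 r
    nlinarith
  set Sg : ℝ := (1 + x)^r - 1 with hSgdef
  have hSg0 : 0 < Sg := by
    rw [hSgdef]
    have h1 : 1 + (r:ℝ)*x ≤ (1+x)^r := by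
      have := one_add_mul_le_pow (by linarith : (-2:ℝ) ≤ x) r
      linarith [this]
    have : (1:ℝ) ≤ (r:ℝ) := by exact_mod_cast hr
    nlinarith
  set b : ℝ := μ * Sg with hbdef
  have hb0 : 0 < b := mul_pos hμ0 hSg0
  -- analytic comparison of exponents
  have hlog2 : 0 < Real.log 2 := Real.log_pos (by norm_num)
  have hr1 : (1:ℝ) ≤ (r:ℝ) := by exact_mod_cast hr
  have hrx : ((r:ℝ)-1)*x ≤ Real.log 2 := by
    have h1 : (r:ℝ)-1 ≤ p*κ*Real.log 2 := by
      rw [div_le_iff₀ hlog2] at hpκ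
      linarith
    rw [hxdef, mul_one_div, div_le_iff₀ hq0]
    linarith
  have hexp2 : (1+x)^(r-1) ≤ 2 := by
    have hc : ((r-1 : ℕ):ℝ) = (r:ℝ)-1 := by
      rw [Nat.cast_sub hr]; norm_num
    calc (1+x)^(r-1) ≤ (Real.exp x)^(r-1) := by
          apply pow_le_pow_left₀ (by linarith) ?_ _
          linarith [Real.add_one_le_exp x]
      _ = Real.exp (((r-1 : ℕ):ℝ)*x) := by
          rw [← Real.exp_nat_mul]
      _ ≤ Real.exp (Real.log 2) := by
          apply Real.exp_le_exp.mpr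
          rw [hc]; exact hrx
      _ = 2 := Real.exp_log (by norm_num)
  have hSg2 : Sg ≤ 2*(r:ℝ)*x := by
    have h1 : (1+x)^r ≤ 1 + (r:ℝ)*x*(1+x)^(r-1) := by
      have h := aux_pow x hx0.le (r-1)
      rw [Nat.sub_add_cancel hr] at h
      have hc : ((r-1 : ℕ):ℝ) + 1 = (r:ℝ) := by
        rw [Nat.cast_sub hr]; norm_num
      rwa [hc] at h
    have h2 : (r:ℝ)*x*(1+x)^(r-1) ≤ (r:ℝ)*x*2 := by
      apply mul_le_mul_of_nonneg_left hexp2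
      positivity
    rw [hSgdef]
    linarith
  have hexpcmp : Real.exp (-(μ/b)) ≤ Real.exp (-(p*κ)/(2*(r:ℝ))) := by
    apply Real.exp_le_exp.mpr
    have hμb : μ/b = 1/Sg := by
      rw [hbdef]
      field_simp
    rw [hμb, neg_div]
    apply neg_le_neg
    rw [div_le_div_iff₀ (by positivity) hSg0]
    have hqx : (p*κ) * x = 1 := by
      rw [hxdef]; field_simp
    calc (p*κ) * Sg ≤ (p*κ) * (2*(r:ℝ)*x) := by
          apply mul_le_mul_of_nonneg_left hSg2 hq0.le
      _ = 2*(r:ℝ)*((p*κ)*x) := by ring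
      _ = 1 * (2*(r:ℝ)) := by rw [hqx]; ring
  -- the exponential moment function
  set w : Finset U → ℝ := fun A => (∏ _u ∈ A, p) * ∏ _u ∈ univ \ A, (1-p) with hw
  set ψ : ℝ → ℝ := fun t => ∑ A ∈ (univ : Finset U).powerset, w A * Real.exp (-(t * NN S A)) with hψdef
  have hψEx : ∀ t, ψ t = Ex (fun _ => p) univ (fun A => Real.exp (-(t * NN S A))) := fun t => rfl
  have hψnn : ∀ t, 0 ≤ ψ t := by
    intro t
    rw [hψEx t]
    exact Ex_nonneg hη₀0 hη₀1 univ fun A => (Real.exp_pos _).le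
  set D : ℝ → ℝ := fun t => ∑ A ∈ (univ : Finset U).powerset,
      w A * (Real.exp (-(t * NN S A)) * (-(NN S A))) with hD
  have hψd : ∀ t, HasDerivAt ψ (D t) t := by
    intro t
    apply HasDerivAt.fun_sum
    intro A _
    have h1 : HasDerivAt (fun t : ℝ => -(t * NN S A)) (-(1 * NN S A)) t :=
      ((hasDerivAt_id t).mul_const (NN S A)).neg
    have h2 := h1.exp
    have h3 := h2.const_mul (w A)
    simpa using h3
  have hkey : ∀ t : ℝ, 0 ≤ t → D t ≤ -(μ * Real.exp (-(t*b)) * ψ t) := by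
    intro t ht
    have hdi := diffineq hl hr hcard hκ hspread hp0 hp1 ht (S := S)
    have hEq : D t = -(Ex (fun _ => p) univ (fun A => NN S A * Real.exp (-(t * NN S A)))) := by
      rw [hD]
      unfold Ex
      rw [← Finset.sum_neg_distrib]
      exact Finset.sum_congr rfl fun A _ => by ring
    rw [hEq]
    apply neg_le_neg
    rw [hψEx t]
    calc μ * Real.exp (-(t*b)) * Ex (fun _ => p) univ (fun A => Real.exp (-(t * NN S A)))
        = (l : ℝ) * p ^ r * Real.exp (-(t * ((l : ℝ) * p ^ r * ((1 + 1/(p*κ))^r - 1))))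
            * Ex (fun _ => p) univ (fun A => Real.exp (-(t * NN S A))) := by
          rw [hμdef, hbdef, hμdef, hSgdef, hxdef]
      _ ≤ _ := hdi
  set g : ℝ → ℝ := fun t => Real.exp ((μ/b) * (1 - Real.exp (-(t*b)))) with hg
  have hgd : ∀ t, HasDerivAt g (g t * ((μ/b) * (0 - Real.exp (-(t*b)) * -(1*b)))) t := by
    intro t
    have h1 : HasDerivAt (fun t : ℝ => -(t*b)) (-(1*b)) t :=
      ((hasDerivAt_id t).mul_const b).neg
    have h2 := h1.exp
    have h3 := (hasDerivAt_const t (1:ℝ)).sub h2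
    have h4 := h3.const_mul (μ/b)
    have h5 := h4.exp
    simpa [hg] using h5
  have hgpos : ∀ t, 0 < g t := fun t => Real.exp_pos _
  have hΦd : ∀ t, HasDerivAt (fun t => ψ t * g t)
      (D t * g t + ψ t * (g t * ((μ/b) * (0 - Real.exp (-(t*b)) * -(1*b))))) t :=
    fun t => (hψd t).mul (hgd t)
  have hΦanti : AntitoneOn (fun t => ψ t * g t) (Set.Ici 0) := by
    apply antitoneOn_of_deriv_nonpos (convex_Ici 0)
    · exact (Differentiable.continuous (fun t => (hΦd t).differentiableAt)).continuousOn
    · intro t _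
      exact (hΦd t).differentiableAt.differentiableWithinAt
    · intro t ht
      rw [interior_Ici] at ht
      have ht0 : 0 ≤ t := le_of_lt ht
      rw [(hΦd t).deriv]
      have h1 := hkey t ht0
      have h2 : (μ/b) * (0 - Real.exp (-(t*b)) * -(1*b)) = μ * Real.exp (-(t*b)) := by
        field_simp
        ring
      rw [h2]
      have h3 : D t * g t ≤ -(μ * Real.exp (-(t*b)) * ψ t) * g t :=
        mul_le_mul_of_nonneg_right h1 (hgpos t).le
      nlinarith [h3]
  have hψ0g0 : ψ 0 * g 0 = 1 := by
    have h1 : ψ 0 = 1 := by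
      rw [hψEx 0]
      have : (fun A : Finset U => Real.exp (-((0:ℝ) * NN S A))) = fun _ => (1:ℝ) := by
        funext A; norm_num
      rw [this, Ex_one]
    have h2 : g 0 = 1 := by
      rw [hg]; norm_num
    rw [h1, h2]; norm_num
  have hψle : ∀ T : ℝ, 0 ≤ T → ψ T ≤ Real.exp (-((μ/b) * (1 - Real.exp (-(T*b))))) := by
    intro T hT
    have h1 : ψ T * g T ≤ 1 := by
      rw [← hψ0g0]
      exact hΦanti (Set.self_mem_Ici) hT hT
    rw [Real.exp_neg]
    show ψ T ≤ (g T)⁻¹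
    rw [← one_div, le_div_iff₀ (hgpos T)]
    exact h1
  -- the target quantity is at most ψ T for every T ≥ 0
  have hP0 : ∀ T : ℝ, 0 ≤ T →
      Ex (fun _ => p) univ (fun A => if ∀ i : Fin l, ¬ S i ⊆ A then (1:ℝ) else 0) ≤ ψ T := by
    intro T hT
    rw [hψEx T]
    apply Ex_mono hη₀0 hη₀1 univ
    intro A
    by_cases h : ∀ i : Fin l, ¬ S i ⊆ A
    · rw [if_pos h]
      have hNN : NN S A = 0 := by
        unfold NN Ind
        apply Finset.sum_eq_zero
        intro i _
        rw [if_neg (h i)]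
      rw [hNN]
      norm_num
    · rw [if_neg h]
      exact (Real.exp_pos _).le
  -- limit T → ∞
  have htend : Filter.Tendsto (fun T => Real.exp (-((μ/b) * (1 - Real.exp (-(T*b))))))
      Filter.atTop (nhds (Real.exp (-(μ/b)))) := by
    have h1 : Filter.Tendsto (fun T : ℝ => T * b) Filter.atTop Filter.atTop :=
      Filter.Tendsto.atTop_mul_const hb0 Filter.tendsto_id
    have h2 : Filter.Tendsto (fun T : ℝ => -(T * b)) Filter.atTop Filter.atBot :=
      Filter.tendsto_neg_atBot_iff.mpr h1
    have h3 : Filter.Tendsto (fun T : ℝ => Real.exp (-(T*b))) Filter.atTop (nhds 0) :=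
      Real.tendsto_exp_atBot.comp h2
    have h4 : Filter.Tendsto (fun T : ℝ => -((μ/b) * (1 - Real.exp (-(T*b)))))
        Filter.atTop (nhds (-((μ/b) * (1 - 0)))) :=
      (((tendsto_const_nhds.sub h3).const_mul (μ/b)).neg)
    have h5 := (Real.continuous_exp.tendsto _).comp h4
    simpa [Function.comp_def] using h5
  have hfinal : Ex (fun _ => p) univ (fun A => if ∀ i : Fin l, ¬ S i ⊆ A then (1:ℝ) else 0)
      ≤ Real.exp (-(μ/b)) := by
    apply ge_of_tendsto htend
    filter_upwards [Filter.eventually_ge_atTop (0:ℝ)] with T hT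
    exact le_trans (hP0 T hT) (hψle T hT)
  exact le_trans hfinal hexpcmp

end main2

/-- The equivalence between `U → Bool` and `Finset U`. -/
def boolEquiv : (U → Bool) ≃ Finset U where
  toFun f := univ.filter (fun u => f u = true)
  invFun A := fun u => decide (u ∈ A)
  left_inv f := by funext u; simp
  right_inv A := by ext u; simp

lemma bridge {l : ℕ} (S : Fin l → Finset U) (p : ℝ) :
    ∑ f : U → Bool,
        (if ∀ i : Fin l, ∃ u ∈ S i, f u = false then
          ∏ u : U, (if f u then p else 1 - p) else 0)
      = Ex (fun _ => p) univ (fun A => if ∀ i : Fin l, ¬ S i ⊆ A then (1:ℝ) else 0) := by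
  unfold Ex
  rw [Finset.powerset_univ]
  apply Fintype.sum_equiv boolEquiv
  intro f
  simp only [boolEquiv, Equiv.coe_fn_mk]
  set A := univ.filter (fun u => f u = true) with hA
  have hcond : (∀ i : Fin l, ∃ u ∈ S i, f u = false) ↔ (∀ i : Fin l, ¬ S i ⊆ A) := by
    apply forall_congr'
    intro i
    rw [Finset.not_subset]
    constructor
    · rintro ⟨u, hu, hf⟩
      exact ⟨u, hu, by simp [hA, hf]⟩
    · rintro ⟨u, hu, hmem⟩
      refine ⟨u, hu, ?_⟩
      rw [hA] at hmem
      simp only [Finset.mem_filter, Finset.mem_univ, true_and] at hmem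
      simpa using hmem
  have hprod : ∏ u : U, (if f u then p else 1-p)
      = (∏ u ∈ A, p) * ∏ u ∈ univ \ A, (1-p) := by
    have h1 : univ \ A = univ.filter (fun u => ¬ (f u = true)) := by
      rw [Finset.filter_not, hA]
    rw [h1, hA]
    exact Finset.prod_ite (fun _ => p) (fun _ => 1-p)
  by_cases h : ∀ i : Fin l, ∃ u ∈ S i, f u = false
  · rw [if_pos h, hprod]
    split_ifs with h2
    · exact ((congrArg (fun z : ℝ => ((∏ u ∈ A, p) * ∏ u ∈ univ \ A, (1-p)) * z) (if_pos h2)).trans (mul_one _)).symm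
    · exact absurd (hcond.mp h) h2
  · rw [if_neg h]
    split_ifs with h2
    · exact absurd (hcond.mpr h2) h
    · exact ((congrArg (fun z : ℝ => ((∏ u ∈ A, p) * ∏ u ∈ univ \ A, (1-p)) * z) (if_neg h2)).trans (mul_zero _)).symm

end Stmt5

/-- spread lemma via Janson's inequality: if `S_1,…,S_l` are `r`-sets that
are `κ`-spread over a finite set `U`, `W` includes each element of `U` independently with
probability `p ∈ (0,1)`, and `pκ ≥ (r-1)/ln 2`, then the probability that no `S_i` is
contained in `W` is at most `exp(-pκ/(2r))`. -/
theorem stmt_5 (U : Type) [Fintype U] [DecidableEq U] (l r : ℕ) (hl : 1 ≤ l) (hr : 1 ≤ r)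
    (S : Fin l → Finset U) (hcard : ∀ i, (S i).card = r)
    (κ : ℝ) (hκ : 1 ≤ κ)
    (hspread : ∀ W : Finset U,
      ((Finset.univ.filter fun i : Fin l => W ⊆ S i).card : ℝ) ≤ (l : ℝ) / κ ^ W.card)
    (p : ℝ) (hp0 : 0 < p) (hp1 : p < 1)
    (hpκ : ((r : ℝ) - 1) / Real.log 2 ≤ p * κ) :
    ∑ f : U → Bool,
        (if ∀ i : Fin l, ∃ u ∈ S i, f u = false then
          ∏ u : U, (if f u then p else 1 - p) else 0)
      ≤ Real.exp (-(p * κ) / (2 * r)) := by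
  rw [Stmt5.bridge S p]
  exact Stmt5.mainbound hl hr hcard hκ hspread hp0 hp1 hpκ
end

section
/- Let m ≥ 2 be an integer and r ≥ w ≥ 0 integers. Then the sum over i from w to r of C(r, i) · (1/m)^i · ((1 - 1/m)/2)^{r-i} is at most (2/(m+1))^w. -/
/-- the binomial tail bound
`Σ_{i=w}^r C(r,i)(1/m)^i((1-1/m)/2)^{r-i} ≤ (2/(m+1))^w` for `m ≥ 2` and `0 ≤ w ≤ r`. -/
theorem stmt_6 (m r w : ℕ) (hm : 2 ≤ m) (hw : w ≤ r) :
    ∑ i ∈ Finset.Icc w r,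
        (r.choose i : ℝ) * (1 / (m : ℝ)) ^ i * ((1 - 1 / (m : ℝ)) / 2) ^ (r - i)
      ≤ (2 / ((m : ℝ) + 1)) ^ w := by
  have hM : (2:ℝ) ≤ (m:ℝ) := by exact_mod_cast hm
  have hMpos : (0:ℝ) < (m:ℝ) := by linarith
  set p : ℝ := 1 / (m:ℝ) with hp_def
  set q : ℝ := (1 - 1 / (m:ℝ)) / 2 with hq_def
  have hp : 0 < p := by positivity
  have hq : 0 ≤ q := by
    have h1 : 1 / (m:ℝ) ≤ 1 := by
      rw [div_le_one hMpos]; linarith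
    rw [hq_def]; linarith
  set lam : ℝ := ((m:ℝ) + 1) / 2 with hlam_def
  have hlam1 : 1 ≤ lam := by rw [hlam_def]; linarith
  have hlam0 : 0 < lam := by linarith
  have key : ∀ i ∈ Finset.Icc w r,
      (r.choose i : ℝ) * p ^ i * q ^ (r - i)
        ≤ (1 / lam) ^ w * ((lam * p) ^ i * q ^ (r - i) * (r.choose i : ℝ)) := by
    intro i hi
    obtain ⟨hwi, hir⟩ := Finset.mem_Icc.mp hi
    have h1 : lam ^ w ≤ lam ^ i := pow_le_pow_right₀ (by linarith) hwi
    have h2 : (1:ℝ) ≤ (1 / lam) ^ w * lam ^ i := by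
      rw [div_pow, one_pow, div_mul_eq_mul_div, le_div_iff₀ (pow_pos hlam0 w), one_mul]
      linarith
    have h3 : p ^ i ≤ (1 / lam) ^ w * lam ^ i * p ^ i :=
      le_mul_of_one_le_left (pow_nonneg hp.le i) h2
    calc (r.choose i : ℝ) * p ^ i * q ^ (r - i)
        ≤ (r.choose i : ℝ) * ((1 / lam) ^ w * lam ^ i * p ^ i) * q ^ (r - i) := by
          apply mul_le_mul_of_nonneg_right _ (pow_nonneg hq (r - i))
          exact mul_le_mul_of_nonneg_left h3 (Nat.cast_nonneg _)
      _ = (1 / lam) ^ w * ((lam * p) ^ i * q ^ (r - i) * (r.choose i : ℝ)) := by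
          rw [mul_pow]; ring
  calc ∑ i ∈ Finset.Icc w r, (r.choose i : ℝ) * p ^ i * q ^ (r - i)
      ≤ ∑ i ∈ Finset.Icc w r,
          (1 / lam) ^ w * ((lam * p) ^ i * q ^ (r - i) * (r.choose i : ℝ)) :=
        Finset.sum_le_sum key
    _ = (1 / lam) ^ w * ∑ i ∈ Finset.Icc w r,
          (lam * p) ^ i * q ^ (r - i) * (r.choose i : ℝ) := by
        rw [Finset.mul_sum]
    _ ≤ (1 / lam) ^ w * ∑ i ∈ Finset.range (r + 1),
          (lam * p) ^ i * q ^ (r - i) * (r.choose i : ℝ) := by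
        apply mul_le_mul_of_nonneg_left _ (by positivity)
        apply Finset.sum_le_sum_of_subset_of_nonneg
        · intro i hi
          obtain ⟨_, hir⟩ := Finset.mem_Icc.mp hi
          exact Finset.mem_range.mpr (Nat.lt_succ_of_le hir)
        · intro i _ _
          have : 0 ≤ lam * p := by positivity
          positivity
    _ = (1 / lam) ^ w * (lam * p + q) ^ r := by rw [add_pow]
    _ = (1 / lam) ^ w := by
        have : lam * p + q = 1 := by
          rw [hlam_def, hp_def, hq_def]
          field_simp
          ring
        rw [this, one_pow, mul_one]
    _ = (2 / ((m:ℝ) + 1)) ^ w := by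
        rw [hlam_def, one_div_div]
end

section
/- Let ξ_1, …, ξ_l be indicator random variables with ξ_i the indicator that S_i ⊆ W, where each S_i ⊆ U has size r, the family (S_1,…,S_l) is κ-spread over U, and W includes each element of U independently with probability p ∈ (0,1). Let μ = Σ_i E[ξ_i] = l·p^r and Λ = Σ_{(i,j): S_i ∩ S_j ≠ ∅} E[ξ_i ξ_j]. Then Λ ≤ μ² · ((1 + 1/(pκ))^r - 1). -/
lemma sum_pow_card' {α : Type*} [DecidableEq α] (s : Finset α) (x : ℝ) :
    ∑ T ∈ s.powerset, x ^ T.card = (x + 1) ^ s.card := by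
  have h := Finset.prod_add (fun _ : α => x) (fun _ => 1) s
  simp only [Finset.prod_const, one_pow, mul_one] at h
  exact h.symm

/-- the correlation bound in the Janson-inequality argument. With
`ξ_i` the indicator that the `r`-set `S_i` is contained in the `p`-random subset `W`,
`E[ξ_i ξ_j] = p^{2r - |S_i ∩ S_j|}`, `μ = l·p^r`, and the family `κ`-spread,
`Λ = Σ_{(i,j): S_i ∩ S_j ≠ ∅} E[ξ_i ξ_j] ≤ μ²((1 + 1/(pκ))^r - 1)`. -/
theorem stmt_7 (U : Type) [Fintype U] [DecidableEq U] (l r : ℕ)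
    (S : Fin l → Finset U) (hcard : ∀ i, (S i).card = r)
    (κ : ℝ) (hκ : 1 ≤ κ)
    (hspread : ∀ W : Finset U,
      ((Finset.univ.filter fun i : Fin l => W ⊆ S i).card : ℝ) ≤ (l : ℝ) / κ ^ W.card)
    (p : ℝ) (hp0 : 0 < p) (hp1 : p < 1) :
    ∑ i : Fin l, ∑ j : Fin l,
        (if (S i ∩ S j).Nonempty then p ^ (2 * r - (S i ∩ S j).card) else 0)
      ≤ ((l : ℝ) * p ^ r) ^ 2 * ((1 + 1 / (p * κ)) ^ r - 1) := by
  classical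
  have hκ0 : (0:ℝ) < κ := lt_of_lt_of_le one_pos hκ
  set x : ℝ := 1 / (p * κ) with hx
  have key : ∀ i : Fin l,
      (∑ j : Fin l, (if (S i ∩ S j).Nonempty then p ^ (2 * r - (S i ∩ S j).card) else 0))
        ≤ (l:ℝ) * p ^ (2*r) * ((1 + x) ^ r - 1) := by
    intro i
    rw [← Finset.sum_filter]
    set A := Finset.univ.filter (fun j : Fin l => (S i ∩ S j).Nonempty) with hA
    set B := (S i).powerset.filter Finset.Nonempty with hB
    have hmaps : ∀ j ∈ A, S i ∩ S j ∈ B := by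
      intro j hj
      simp only [hA, Finset.mem_filter, Finset.mem_univ, true_and] at hj
      simp only [hB, Finset.mem_filter, Finset.mem_powerset]
      exact ⟨Finset.inter_subset_left, hj⟩
    have h2 := Finset.sum_fiberwise_of_maps_to (g := fun j => S i ∩ S j) hmaps
      (fun j => p ^ (2*r - (S i ∩ S j).card))
    rw [← h2]
    have step1 : ∀ T ∈ B,
        (∑ j ∈ A.filter (fun j => S i ∩ S j = T), p ^ (2*r - (S i ∩ S j).card))
          ≤ (l:ℝ) * p ^ (2*r) * x ^ T.card := by
      intro T hT
      simp only [hB, Finset.mem_filter, Finset.mem_powerset] at hT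
      have htr : T.card ≤ r := by rw [← hcard i]; exact Finset.card_le_card hT.1
      have h3 : (∑ j ∈ A.filter (fun j => S i ∩ S j = T), p ^ (2*r - (S i ∩ S j).card))
          = ((A.filter (fun j => S i ∩ S j = T)).card : ℝ) * p ^ (2*r - T.card) := by
        rw [Finset.sum_congr rfl (fun j hj => by
          have hj' : S i ∩ S j = T := (Finset.mem_filter.mp hj).2
          rw [hj'])]
        simp [Finset.sum_const, nsmul_eq_mul]
      rw [h3]
      have hcard1 : ((A.filter (fun j => S i ∩ S j = T)).card : ℝ) ≤ (l:ℝ) / κ ^ T.card := by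
        refine le_trans ?_ (hspread T)
        have hsub : A.filter (fun j => S i ∩ S j = T)
            ⊆ Finset.univ.filter (fun j : Fin l => T ⊆ S j) := by
          intro j hj
          simp only [Finset.mem_filter, Finset.mem_univ, true_and] at hj ⊢
          exact hj.2 ▸ Finset.inter_subset_right
        exact_mod_cast Finset.card_le_card hsub
      have hppos : (0:ℝ) ≤ p ^ (2*r - T.card) := le_of_lt (pow_pos hp0 _)
      calc ((A.filter (fun j => S i ∩ S j = T)).card : ℝ) * p ^ (2*r - T.card)
          ≤ ((l:ℝ) / κ ^ T.card) * p ^ (2*r - T.card) :=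
            mul_le_mul_of_nonneg_right hcard1 hppos
        _ = (l:ℝ) * p ^ (2*r) * x ^ T.card := by
            have hts : T.card ≤ 2*r := le_trans htr (by omega)
            rw [pow_sub₀ p (ne_of_gt hp0) hts, hx]
            have hκt : (κ : ℝ) ^ T.card ≠ 0 := by positivity
            have hpt : (p : ℝ) ^ T.card ≠ 0 := by positivity
            field_simp
            rw [one_div, inv_pow, mul_pow, mul_assoc (l:ℝ), mul_assoc, mul_comm (κ ^ T.card) (p ^ T.card),
              mul_inv_cancel₀ (mul_ne_zero hpt hκt), mul_one]
    calc ∑ T ∈ B, ∑ j ∈ A.filter (fun j => S i ∩ S j = T), p ^ (2*r - (S i ∩ S j).card)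
        ≤ ∑ T ∈ B, (l:ℝ) * p ^ (2*r) * x ^ T.card := Finset.sum_le_sum step1
      _ = (l:ℝ) * p ^ (2*r) * ∑ T ∈ B, x ^ T.card := by rw [Finset.mul_sum]
      _ = (l:ℝ) * p ^ (2*r) * ((1 + x) ^ r - 1) := by
          congr 1
          have hins : insert (∅ : Finset U) B = (S i).powerset := by
            ext T
            simp only [hB, Finset.mem_insert, Finset.mem_filter, Finset.mem_powerset]
            constructor
            · rintro (rfl | ⟨h1, _⟩)
              · exact Finset.empty_subset _
              · exact h1
            · intro hT
              rcases T.eq_empty_or_nonempty with rfl | hne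
              · exact Or.inl rfl
              · exact Or.inr ⟨hT, hne⟩
          have hnotmem : (∅ : Finset U) ∉ B := by
            simp [hB, Finset.not_nonempty_empty]
          have := Finset.sum_insert (f := fun T : Finset U => x ^ T.card) hnotmem
          rw [hins] at this
          have hps : ∑ T ∈ (S i).powerset, x ^ T.card = (x + 1) ^ r := by
            rw [sum_pow_card', hcard i]
          rw [hps] at this
          simp only [Finset.card_empty, pow_zero] at this
          have : ∑ T ∈ B, x ^ T.card = (x + 1) ^ r - 1 := by linarith
          rw [this]; ring
  calc ∑ i : Fin l, ∑ j : Fin l,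
        (if (S i ∩ S j).Nonempty then p ^ (2 * r - (S i ∩ S j).card) else 0)
      ≤ ∑ _i : Fin l, (l:ℝ) * p ^ (2*r) * ((1 + x) ^ r - 1) :=
        Finset.sum_le_sum (fun i _ => key i)
    _ = (l:ℝ) * ((l:ℝ) * p ^ (2*r) * ((1 + x) ^ r - 1)) := by
        simp [Finset.sum_const, Finset.card_univ, mul_comm]
    _ = ((l : ℝ) * p ^ r) ^ 2 * ((1 + 1 / (p * κ)) ^ r - 1) := by
        rw [hx, show 2*r = r*2 from mul_comm 2 r, pow_mul]
        ring
end

section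
/- Let G be the k × (L + 2r) cylinder graph (vertex set [k] × [L+2r], with vertices (i,a) and (i',a') adjacent iff either a = a' and i - i' ≡ ±1 (mod k), or i = i' and |a - a'| = 1). Suppose S is a subset of vertices that is a minimal (with respect to set inclusion) vertex separator between column 1 and column L+2r, i.e., removing S disconnects column 1 from column L+2r, but removing any proper subset of S does not. Then the difference between the maximum and minimum column indices of vertices in S is at most |S| - 1. -/
/-- The `k × N` cylinder graph: vertices `(i,a) ∈ ZMod k × Fin N`; `(i,a)` and `(i',a')`
are adjacent iff they are distinct and either they are in the same column with
`i - i' ≡ ±1 (mod k)`, or in the same row with `|a - a'| = 1`. -/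
def cylinderGraph (k N : ℕ) : SimpleGraph (ZMod k × Fin N) where
  Adj v w := v ≠ w ∧
    ((v.2 = w.2 ∧ (v.1 = w.1 + 1 ∨ w.1 = v.1 + 1)) ∨
     (v.1 = w.1 ∧ ((v.2 : ℕ) + 1 = (w.2 : ℕ) ∨ (w.2 : ℕ) + 1 = (v.2 : ℕ))))
  symm := by
    constructor
    rintro v w ⟨hne, h | h⟩
    · exact ⟨hne.symm, Or.inl ⟨h.1.symm, h.2.symm⟩⟩
    · exact ⟨hne.symm, Or.inr ⟨h.1.symm, h.2.symm⟩⟩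
  loopless := by constructor; rintro v ⟨hne, -⟩; exact hne rfl

/-- `S` is a vertex separator between the first and the last column of the cylinder:
every walk from a vertex in column `1` (index `0`) to a vertex in column `N`
(index `N-1`) meets `S`. -/
def SeparatesEnds (k N : ℕ) (S : Set (ZMod k × Fin N)) : Prop :=
  ∀ u v : ZMod k × Fin N, (u.2 : ℕ) = 0 → (v.2 : ℕ) = N - 1 →
    ∀ p : (cylinderGraph k N).Walk u v, ∃ x ∈ p.support, x ∈ S

lemma adj_col {k N : ℕ} {u w : ZMod k × Fin N} (h : (cylinderGraph k N).Adj u w) :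
    (w.2 : ℕ) ≤ (u.2 : ℕ) + 1 ∧ (u.2 : ℕ) ≤ (w.2 : ℕ) + 1 := by
  rcases h with ⟨-, ⟨h1, -⟩ | ⟨-, h2 | h2⟩⟩
  · rw [h1]; omega
  · omega
  · omega

lemma col_walk {k N : ℕ} (hk : 2 ≤ k) (a : Fin N) (i j : ZMod k) :
    ∃ q : (cylinderGraph k N).Walk (i, a) (j, a), ∀ x ∈ q.support, x.2 = a := by
  haveI : Fact (1 < k) := ⟨hk⟩
  haveI : NeZero k := ⟨by omega⟩
  have key : ∀ m : ℕ, ∀ i : ZMod k,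
      ∃ q : (cylinderGraph k N).Walk (i, a) (i + (m : ZMod k), a),
        ∀ x ∈ q.support, x.2 = a := by
    intro m
    induction m with
    | zero => intro i; rw [Nat.cast_zero, add_zero]
              exact ⟨SimpleGraph.Walk.nil, by simp⟩
    | succ m ih =>
      intro i
      obtain ⟨q, hq⟩ := ih (i + 1)
      have he : ((i + 1) + (m : ZMod k), a) = (i + ((m + 1 : ℕ) : ZMod k), a) := by
        rw [show (i + 1) + (m : ZMod k) = i + ((m + 1 : ℕ) : ZMod k) by push_cast; ring]
      let q' := q.copy rfl he
      have hq' : ∀ x ∈ q'.support, x.2 = a := by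
        intro x hx; rw [SimpleGraph.Walk.support_copy] at hx; exact hq x hx
      have hadj : (cylinderGraph k N).Adj (i, a) (i + 1, a) := by
        refine ⟨?_, Or.inl ⟨rfl, Or.inr rfl⟩⟩
        intro h
        have : i = i + 1 := congrArg Prod.fst h
        exact one_ne_zero (left_eq_add.mp this)
      refine ⟨SimpleGraph.Walk.cons hadj q', ?_⟩
      intro x hx
      rw [SimpleGraph.Walk.support_cons, List.mem_cons] at hx
      rcases hx with rfl | hx
      · rfl
      · exact hq' x hx
  obtain ⟨q, hq⟩ := key (j - i).val i
  have he : (i + (((j - i).val : ℕ) : ZMod k), a) = (j, a) := by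
    rw [ZMod.natCast_val, ZMod.cast_id]; ring_nf
  refine ⟨q.copy rfl he, ?_⟩
  intro x hx; rw [SimpleGraph.Walk.support_copy] at hx; exact hq x hx

lemma reach_left {k N : ℕ} (S : Finset (ZMod k × Fin N)) (c : ℕ)
    (hcS : ∀ x ∈ S, (x.2 : ℕ) ≠ c) :
    ∀ {u v : ZMod k × Fin N} (p : (cylinderGraph k N).Walk u v),
      (∀ x ∈ p.support, ¬(x ∈ S ∧ (x.2 : ℕ) < c)) → (u.2 : ℕ) ≤ c → c ≤ (v.2 : ℕ) →
      ∃ w : ZMod k × Fin N, (w.2 : ℕ) = c ∧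
        ∃ q : (cylinderGraph k N).Walk u w, ∀ x ∈ q.support, x ∉ S := by
  intro u v p
  induction p with
  | @nil z =>
    intro _ hu hv
    have hc : (z.2 : ℕ) = c := le_antisymm hu hv
    exact ⟨z, hc, SimpleGraph.Walk.nil, by
      intro x hx; simp at hx; subst hx; exact fun hS => hcS x hS hc⟩
  | @cons a b z hadj p ih =>
    intro hp hu hv
    by_cases hc : (a.2 : ℕ) = c
    · exact ⟨a, hc, SimpleGraph.Walk.nil, by
        intro y hy; simp at hy; subst hy; exact fun hS => hcS y hS hc⟩
    · have hu' : (a.2 : ℕ) < c := lt_of_le_of_ne hu hc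
      have hx : (b.2 : ℕ) ≤ c := by
        have := (adj_col hadj).1; omega
      obtain ⟨w, hw, q, hq⟩ := ih (fun y hy => hp y (by
        rw [SimpleGraph.Walk.support_cons]; exact List.mem_cons_of_mem _ hy)) hx hv
      refine ⟨w, hw, SimpleGraph.Walk.cons hadj q, ?_⟩
      intro y hy
      rw [SimpleGraph.Walk.support_cons, List.mem_cons] at hy
      rcases hy with rfl | hy
      · exact fun hS => hp y (by rw [SimpleGraph.Walk.support_cons]; exact List.mem_cons_self) ⟨hS, hu'⟩
      · exact hq y hy

lemma reach_right {k N : ℕ} (S : Finset (ZMod k × Fin N)) (c : ℕ)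
    (hcS : ∀ x ∈ S, (x.2 : ℕ) ≠ c) :
    ∀ {u v : ZMod k × Fin N} (p : (cylinderGraph k N).Walk u v),
      (∀ x ∈ p.support, ¬(x ∈ S ∧ c < (x.2 : ℕ))) → c ≤ (u.2 : ℕ) → (v.2 : ℕ) ≤ c →
      ∃ w : ZMod k × Fin N, (w.2 : ℕ) = c ∧
        ∃ q : (cylinderGraph k N).Walk u w, ∀ x ∈ q.support, x ∉ S := by
  intro u v p
  induction p with
  | @nil z =>
    intro _ hu hv
    have hc : (z.2 : ℕ) = c := le_antisymm hv hu
    exact ⟨z, hc, SimpleGraph.Walk.nil, by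
      intro x hx; simp at hx; subst hx; exact fun hS => hcS x hS hc⟩
  | @cons a b z hadj p ih =>
    intro hp hu hv
    by_cases hc : (a.2 : ℕ) = c
    · exact ⟨a, hc, SimpleGraph.Walk.nil, by
        intro y hy; simp at hy; subst hy; exact fun hS => hcS y hS hc⟩
    · have hu' : c < (a.2 : ℕ) := lt_of_le_of_ne hu (Ne.symm hc)
      have hx : c ≤ (b.2 : ℕ) := by
        have := (adj_col hadj).2; omega
      obtain ⟨w, hw, q, hq⟩ := ih (fun y hy => hp y (by
        rw [SimpleGraph.Walk.support_cons]; exact List.mem_cons_of_mem _ hy)) hx hv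
      refine ⟨w, hw, SimpleGraph.Walk.cons hadj q, ?_⟩
      intro y hy
      rw [SimpleGraph.Walk.support_cons, List.mem_cons] at hy
      rcases hy with rfl | hy
      · exact fun hS => hp y (by rw [SimpleGraph.Walk.support_cons]; exact List.mem_cons_self) ⟨hS, hu'⟩
      · exact hq y hy
/-- a minimal vertex separator `S` between the first and last column of the
`k × (L+2r)` cylinder has column-diameter at most `|S| - 1`: for all `u, v ∈ S`,
`col(u) ≤ col(v) + (|S| - 1)`. -/
theorem stmt_9 (k L r : ℕ) (hk : 2 ≤ k)
    (S : Finset (ZMod k × Fin (L + 2 * r)))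
    (hsep : SeparatesEnds k (L + 2 * r) ↑S)
    (hmin : ∀ S' : Finset (ZMod k × Fin (L + 2 * r)),
      S' ⊂ S → ¬ SeparatesEnds k (L + 2 * r) ↑S') :
    ∀ u ∈ S, ∀ v ∈ S, (u.2 : ℕ) ≤ (v.2 : ℕ) + (S.card - 1) := by
  have hN : ∀ x : Fin (L + 2 * r), (x : ℕ) < L + 2 * r := fun x => x.isLt
  -- every column strictly between two columns of S meets S
  have claim : ∀ c : ℕ, (∃ s ∈ S, (s.2 : ℕ) < c) → (∃ t ∈ S, c < (t.2 : ℕ)) →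
      ∃ x ∈ S, (x.2 : ℕ) = c := by
    rintro c ⟨s, hs, hsc⟩ ⟨t, ht, htc⟩
    by_contra hempty
    push_neg at hempty
    -- left piece
    have hL : ¬ SeparatesEnds k (L + 2 * r) ↑(S.filter (fun x => (x.2 : ℕ) < c)) := by
      apply hmin
      refine ⟨Finset.filter_subset _ _, fun hsub => ?_⟩
      have := hsub ht
      rw [Finset.mem_filter] at this
      omega
    have hR : ¬ SeparatesEnds k (L + 2 * r) ↑(S.filter (fun x => c < (x.2 : ℕ))) := by
      apply hmin
      refine ⟨Finset.filter_subset _ _, fun hsub => ?_⟩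
      have := hsub hs
      rw [Finset.mem_filter] at this
      omega
    rw [SeparatesEnds] at hL hR
    push_neg at hL hR
    obtain ⟨u1, v1, hu1, hv1, p1, hp1⟩ := hL
    obtain ⟨u2, v2, hu2, hv2, p2, hp2⟩ := hR
    have htlt : (t.2 : ℕ) < L + 2 * r := t.2.isLt
    have hcend : c ≤ L + 2 * r - 1 := by omega
    -- a walk from u1 to a vertex in column c avoiding S
    obtain ⟨w1, hw1, q1, hq1⟩ := reach_left S c hempty p1
      (by intro x hx hxc
          exact hp1 x hx (by simpa [Finset.mem_filter] using hxc))
      (by omega) (by omega)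
    obtain ⟨w2, hw2, q2, hq2⟩ := reach_right S c hempty p2.reverse
      (by intro x hx hxc
          rw [SimpleGraph.Walk.support_reverse, List.mem_reverse] at hx
          exact hp2 x hx (by simpa [Finset.mem_filter] using hxc))
      (by simp only [hv2]; omega) (by omega)
    -- connect w1 and w2 inside column c
    obtain ⟨i1, a1⟩ := w1
    obtain ⟨i2, a2⟩ := w2
    have haa : a1 = a2 := Fin.ext (by simp only at hw1 hw2; omega)
    subst haa
    obtain ⟨qc, hqc⟩ := col_walk (N := L + 2 * r) hk a1 i1 i2
    have P := q1.append (qc.append q2.reverse)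
    obtain ⟨x, hxP, hxS⟩ := hsep u1 v2 hu1 hv2 (q1.append (qc.append q2.reverse))
    rw [SimpleGraph.Walk.mem_support_append_iff,
        SimpleGraph.Walk.mem_support_append_iff,
        SimpleGraph.Walk.support_reverse, List.mem_reverse] at hxP
    rcases hxP with hx1 | hxc | hx2
    · exact hq1 x hx1 hxS
    · exact hempty x hxS (by rw [hqc x hxc]; exact hw1)
    · exact hq2 x hx2 hxS
  -- conclude
  intro u hu v hv
  rcases le_or_gt (u.2 : ℕ) (v.2 : ℕ) with h | h
  · omega
  · have hsub : Finset.Icc (v.2 : ℕ) (u.2 : ℕ) ⊆ S.image (fun x => (x.2 : ℕ)) := by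
      intro c hc
      rw [Finset.mem_Icc] at hc
      rw [Finset.mem_image]
      rcases eq_or_lt_of_le hc.1 with heq | hlt
      · exact ⟨v, hv, heq⟩
      rcases eq_or_lt_of_le hc.2 with heq | hlt2
      · exact ⟨u, hu, heq.symm⟩
      obtain ⟨x, hx, hxc⟩ := claim c ⟨v, hv, hlt⟩ ⟨u, hu, hlt2⟩
      exact ⟨x, hx, hxc⟩
    have h1 := Finset.card_le_card hsub
    have h2 := Finset.card_image_le (s := S) (f := fun x => (x.2 : ℕ))
    rw [Nat.card_Icc] at h1
    omega
end

section
/- Let ℛ ⊆ {0,1}^n × O be a total search problem (for every x there exists o with (x,o) ∈ ℛ), let m ≥ 2, and define the composed search problem ℛ ∘ XOR_m^n ⊆ ({0,1}^{m})^n × O by ((y_1,…,y_n), o) ∈ ℛ ∘ XOR_m^n iff (z, o) ∈ ℛ where z_i = y_{i,1} ⊕ ⋯ ⊕ y_{i,m}. If there is a decision tree of width w and size s solving ℛ ∘ XOR_m^n, then there is a decision tree of width at most w/(m-1) and depth at most log₂ s solving ℛ. -/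
/-- Decision trees for total search problems over Boolean variables indexed by `V`:
each node carries a partial assignment (its `ρ`), internal nodes query a variable. -/
inductive DTree (V O : Type) where
  | leaf (ρ : V → Option Bool) (o : O)
  | node (ρ : V → Option Bool) (q : V) (t0 : DTree V O) (t1 : DTree V O)

namespace DTree

variable {V O : Type}

/-- The partial assignment at the root node of a tree. -/
def rho : DTree V O → (V → Option Bool)
  | leaf ρ _ => ρ
  | node ρ _ _ _ => ρ

/-- Number of nodes. -/
def size : DTree V O → ℕ
  | leaf _ _ => 1
  | node _ _ t0 t1 => 1 + t0.size + t1.size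

/-- Length of the longest root-to-leaf path. -/
def depth : DTree V O → ℕ
  | leaf _ _ => 0
  | node _ _ t0 t1 => 1 + max t0.depth t1.depth

/-- Maximum number of fixed variables in any node's partial assignment. -/
def width [Fintype V] [DecidableEq V] : DTree V O → ℕ
  | leaf ρ _ => (Finset.univ.filter fun v => (ρ v).isSome).card
  | node ρ _ t0 t1 =>
      max ((Finset.univ.filter fun v => (ρ v).isSome).card) (max t0.width t1.width)

/-- `x` extends the partial assignment `ρ`. -/
def Extends (ρ : V → Option Bool) (x : V → Bool) : Prop :=
  ∀ v b, ρ v = some b → x v = b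

/-- Consistency condition between a node's assignment `ρ` (querying `q`) and the
assignment `ρ'` of its `bit`-child: the child may record the answer `bit` at `q` or
forget it, and elsewhere agrees with `ρ` or forgets. -/
def ChildOk (ρ : V → Option Bool) (q : V) (bit : Bool) (ρ' : V → Option Bool) : Prop :=
  (ρ' q = some bit ∨ ρ' q = none) ∧ ∀ v, v ≠ q → (ρ' v = ρ v ∨ ρ' v = none)

/-- Structural correctness of a decision tree for the search problem `Rel`. -/
def Ok (Rel : (V → Bool) → O → Prop) : DTree V O → Prop
  | leaf ρ o => ∀ x : V → Bool, Extends ρ x → Rel x o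
  | node ρ q t0 t1 =>
      ρ q = none ∧ ChildOk ρ q false t0.rho ∧ ChildOk ρ q true t1.rho ∧
        Ok Rel t0 ∧ Ok Rel t1

/-- The decision tree solves `Rel`: it is structurally correct and its root carries
the empty partial assignment. -/
def Solves (Rel : (V → Bool) → O → Prop) (T : DTree V O) : Prop :=
  Ok Rel T ∧ T.rho = fun _ => none

end DTree

namespace Lift
open Finset

variable {n m : ℕ} {O : Type}

def cnt (ρ : Fin n × Fin m → Option Bool) (i : Fin n) : ℕ :=
  (Finset.univ.filter fun j : Fin m => (ρ (i, j)).isSome).card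

def par (ρ : Fin n × Fin m → Option Bool) (i : Fin n) : Bool :=
  decide ((Finset.univ.filter fun j : Fin m => ρ (i, j) = some true).card % 2 = 1)

def fgt (ρ : Fin n × Fin m → Option Bool) (α : Fin n → Option Bool) : Fin n → Option Bool :=
  fun i => if m - 1 ≤ cnt ρ i then α i else none

def lift : DTree (Fin n × Fin m) O → (Fin n → Option Bool) → DTree (Fin n) O
  | .leaf _ o, α => .leaf α o
  | .node ρ q t0 t1, α =>
    match α q.1 with
    | some c =>
      if xor c (par ρ q.1) then lift t1 (fgt t1.rho α) else lift t0 (fgt t0.rho α)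
    | none =>
      if cnt ρ q.1 = m - 1 then
        .node α q.1
          (if par ρ q.1 then lift t1 (fgt t1.rho (Function.update α q.1 (some false)))
           else lift t0 (fgt t0.rho (Function.update α q.1 (some false))))
          (if par ρ q.1 then lift t0 (fgt t0.rho (Function.update α q.1 (some true)))
           else lift t1 (fgt t1.rho (Function.update α q.1 (some true))))
      else
        if t0.size ≤ t1.size then lift t0 (fgt t0.rho α) else lift t1 (fgt t1.rho α)

lemma lift_leaf (ρ : Fin n × Fin m → Option Bool) (o : O) (α : Fin n → Option Bool) :
    lift (DTree.leaf ρ o) α = DTree.leaf α o := rfl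

lemma lift_node_some {α : Fin n → Option Bool} {q : Fin n × Fin m} {c : Bool}
    (ρ : Fin n × Fin m → Option Bool) (t0 t1 : DTree (Fin n × Fin m) O)
    (hα : α q.1 = some c) :
    lift (DTree.node ρ q t0 t1) α =
      if xor c (par ρ q.1) then lift t1 (fgt t1.rho α) else lift t0 (fgt t0.rho α) := by
  show (match α q.1 with
    | some c =>
      if xor c (par ρ q.1) then lift t1 (fgt t1.rho α) else lift t0 (fgt t0.rho α)
    | none =>
      if cnt ρ q.1 = m - 1 then
        DTree.node α q.1
          (if par ρ q.1 then lift t1 (fgt t1.rho (Function.update α q.1 (some false)))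
           else lift t0 (fgt t0.rho (Function.update α q.1 (some false))))
          (if par ρ q.1 then lift t0 (fgt t0.rho (Function.update α q.1 (some true)))
           else lift t1 (fgt t1.rho (Function.update α q.1 (some true))))
      else
        if t0.size ≤ t1.size then lift t0 (fgt t0.rho α) else lift t1 (fgt t1.rho α)) = _
  rw [hα]

lemma lift_node_none {α : Fin n → Option Bool} {q : Fin n × Fin m}
    (ρ : Fin n × Fin m → Option Bool) (t0 t1 : DTree (Fin n × Fin m) O)
    (hα : α q.1 = none) :
    lift (DTree.node ρ q t0 t1) α =
      (if cnt ρ q.1 = m - 1 then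
        DTree.node α q.1
          (if par ρ q.1 then lift t1 (fgt t1.rho (Function.update α q.1 (some false)))
           else lift t0 (fgt t0.rho (Function.update α q.1 (some false))))
          (if par ρ q.1 then lift t0 (fgt t0.rho (Function.update α q.1 (some true)))
           else lift t1 (fgt t1.rho (Function.update α q.1 (some true))))
      else
        if t0.size ≤ t1.size then lift t0 (fgt t0.rho α) else lift t1 (fgt t1.rho α)) := by
  show (match α q.1 with
    | some c =>
      if xor c (par ρ q.1) then lift t1 (fgt t1.rho α) else lift t0 (fgt t0.rho α)
    | none =>
      if cnt ρ q.1 = m - 1 then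
        DTree.node α q.1
          (if par ρ q.1 then lift t1 (fgt t1.rho (Function.update α q.1 (some false)))
           else lift t0 (fgt t0.rho (Function.update α q.1 (some false))))
          (if par ρ q.1 then lift t0 (fgt t0.rho (Function.update α q.1 (some true)))
           else lift t1 (fgt t1.rho (Function.update α q.1 (some true))))
      else
        if t0.size ≤ t1.size then lift t0 (fgt t0.rho α) else lift t1 (fgt t1.rho α)) = _
  rw [hα]

def Sub (ρ' ρ : Fin n × Fin m → Option Bool) : Prop := ∀ v, ρ' v = ρ v ∨ ρ' v = none

lemma fgt_cases (ρ : Fin n × Fin m → Option Bool) (α : Fin n → Option Bool) (i : Fin n) :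
    fgt ρ α i = α i ∨ fgt ρ α i = none := by
  unfold fgt; split <;> simp

lemma rho_lift (T : DTree (Fin n × Fin m) O) (α : Fin n → Option Bool) (v : Fin n) :
    (lift T α).rho v = α v ∨ (lift T α).rho v = none := by
  induction T generalizing α with
  | leaf ρ o => left; rfl
  | node ρ q t0 t1 ih0 ih1 =>
    have key : ∀ (t : DTree (Fin n × Fin m) O),
        (∀ β, (lift t β).rho v = β v ∨ (lift t β).rho v = none) →
        ∀ β, (lift t (fgt t.rho β)).rho v = β v ∨ (lift t (fgt t.rho β)).rho v = none := by
      intro t ih β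
      rcases ih (fgt t.rho β) with h | h
      · rcases fgt_cases t.rho β v with h2 | h2
        · left; rw [h, h2]
        · right; rw [h, h2]
      · right; exact h
    rcases hα : α q.1 with _ | c
    · rw [lift_node_none ρ t0 t1 hα]
      split
      · left; rfl
      · split
        · exact key t0 ih0 α
        · exact key t1 ih1 α
    · rw [lift_node_some ρ t0 t1 hα]
      split
      · exact key t1 ih1 α
      · exact key t0 ih0 α

lemma sub_childOk {ρ ρ' : Fin n × Fin m → Option Bool} {q : Fin n × Fin m} {b : Bool}
    (h : DTree.ChildOk ρ q b ρ') :
    Sub ρ' (Function.update ρ q (some b)) := by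
  intro v
  rcases eq_or_ne v q with rfl | hv
  · rw [Function.update_self]; exact h.1
  · rw [Function.update_of_ne hv]; exact h.2 v hv

lemma sub_isSome {ρ ρ' : Fin n × Fin m → Option Bool} (h : Sub ρ' ρ) {v : Fin n × Fin m}
    (hv : (ρ' v).isSome) : ρ' v = ρ v := by
  rcases h v with h' | h'
  · exact h'
  · rw [h'] at hv; simp at hv

lemma cnt_mono {ρ ρ' : Fin n × Fin m → Option Bool} (h : Sub ρ' ρ) (i : Fin n) :
    cnt ρ' i ≤ cnt ρ i := by
  apply card_le_card
  intro j hj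
  simp only [mem_filter, mem_univ, true_and] at hj ⊢
  rw [← sub_isSome h hj]; exact hj

lemma cnt_update_ne {ρ : Fin n × Fin m → Option Bool} {q : Fin n × Fin m} {i : Fin n}
    (hne : q.1 ≠ i) (v : Option Bool) : cnt (Function.update ρ q v) i = cnt ρ i := by
  unfold cnt
  congr 1
  apply filter_congr
  intro j _
  rw [Function.update_of_ne (fun h => hne (congrArg Prod.fst h).symm)]

lemma cnt_update_self {ρ : Fin n × Fin m → Option Bool} {q : Fin n × Fin m}
    (hq : ρ q = none) (b : Bool) :
    cnt (Function.update ρ q (some b)) q.1 = cnt ρ q.1 + 1 := by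
  unfold cnt
  have hset : (Finset.univ.filter fun j : Fin m =>
      ((Function.update ρ q (some b)) (q.1, j)).isSome)
      = insert q.2 (Finset.univ.filter fun j : Fin m => (ρ (q.1, j)).isSome) := by
    ext j
    by_cases hj : j = q.2
    · subst hj
      simp [Function.update_apply, Prod.mk.eta]
    · have hne : ((q.1, j) : Fin n × Fin m) ≠ q := by
        intro h; exact hj (congrArg Prod.snd h)
      simp [Function.update_apply, hne, hj]
  rw [hset, card_insert_of_notMem (by simp [Prod.mk.eta, hq])]

lemma cnt_le_of_none {ρ : Fin n × Fin m → Option Bool} {i : Fin n} {j : Fin m}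
    (hq : ρ (i, j) = none) : cnt ρ i + 1 ≤ m := by
  have h1 : cnt ρ i ≤ (Finset.univ.erase j).card := by
    apply card_le_card
    intro j' hj'
    simp only [mem_filter, mem_univ, true_and] at hj'
    simp only [mem_erase, mem_univ, and_true]
    intro h; subst h; rw [hq] at hj'; simp at hj'
  rw [card_erase_of_mem (mem_univ j), card_univ, Fintype.card_fin] at h1
  have := j.2
  omega

lemma cnt_full {ρ : Fin n × Fin m → Option Bool} {i : Fin n}
    (h : ∀ j, (ρ (i, j)).isSome) : cnt ρ i = m := by
  unfold cnt
  rw [filter_true_of_mem (fun j _ => h j), card_univ, Fintype.card_fin]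

lemma par_congr {ρ ρ' : Fin n × Fin m → Option Bool} {i : Fin n}
    (h : ∀ j, ρ' (i, j) = ρ (i, j)) : par ρ' i = par ρ i := by
  unfold par
  have : (Finset.univ.filter fun j : Fin m => ρ' (i, j) = some true)
      = Finset.univ.filter fun j : Fin m => ρ (i, j) = some true := by
    apply filter_congr
    intro j _
    rw [h j]
  rw [this]

lemma dec_succ (k : ℕ) : decide ((k + 1) % 2 = 1) = !decide (k % 2 = 1) := by
  rw [← decide_not, decide_eq_decide]; omega

lemma par_update {ρ : Fin n × Fin m → Option Bool} {q : Fin n × Fin m}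
    (hq : ρ q = none) (b : Bool) :
    par (Function.update ρ q (some b)) q.1 = xor b (par ρ q.1) := by
  cases b
  · have hset : (Finset.univ.filter fun j : Fin m =>
        (Function.update ρ q (some false)) (q.1, j) = some true)
        = Finset.univ.filter fun j : Fin m => ρ (q.1, j) = some true := by
      ext j
      by_cases hj : j = q.2
      · subst hj; simp [Function.update_apply, Prod.mk.eta, hq]
      · have hne : ((q.1, j) : Fin n × Fin m) ≠ q := fun h => hj (congrArg Prod.snd h)
        simp [Function.update_apply, hne]
    unfold par
    rw [hset, Bool.false_xor]
  · have hset : (Finset.univ.filter fun j : Fin m =>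
        (Function.update ρ q (some true)) (q.1, j) = some true)
        = insert q.2 (Finset.univ.filter fun j : Fin m => ρ (q.1, j) = some true) := by
      ext j
      by_cases hj : j = q.2
      · subst hj; simp [Function.update_apply, Prod.mk.eta]
      · have hne : ((q.1, j) : Fin n × Fin m) ≠ q := fun h => hj (congrArg Prod.snd h)
        simp [Function.update_apply, hne, hj]
    unfold par
    rw [hset, card_insert_of_notMem (by simp [Prod.mk.eta, hq]), dec_succ, Bool.true_xor]

def Inv1 (ρ : Fin n × Fin m → Option Bool) (α : Fin n → Option Bool) : Prop :=
  ∀ i, (∀ j, (ρ (i, j)).isSome) → α i = some (par ρ i)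
def Inv2 (ρ : Fin n × Fin m → Option Bool) (α : Fin n → Option Bool) : Prop :=
  ∀ i, (α i).isSome → m - 1 ≤ cnt ρ i
def pen (ρ : Fin n × Fin m → Option Bool) (α : Fin n → Option Bool) : ℕ :=
  (Finset.univ.filter fun i => m - 1 ≤ cnt ρ i ∧ α i = none).card

lemma inv2_fgt (ρ : Fin n × Fin m → Option Bool) (α : Fin n → Option Bool) :
    Inv2 ρ (fgt ρ α) := by
  intro i h
  by_cases hc : m - 1 ≤ cnt ρ i
  · exact hc
  · simp [fgt, hc] at h

lemma inv1_step {ρ ρ' : Fin n × Fin m → Option Bool} {q : Fin n × Fin m} {b : Bool}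
    (hq : ρ q = none) (hsub : Sub ρ' (Function.update ρ q (some b)))
    (β : Fin n → Option Bool)
    (h1 : ∀ i, i ≠ q.1 → (∀ j, (ρ (i, j)).isSome) → β i = some (par ρ i))
    (hblk : β q.1 = some (xor b (par ρ q.1)) ∨ cnt ρ q.1 + 1 < m) :
    Inv1 ρ' (fgt ρ' β) := by
  intro i hfull
  have hagree : ∀ j, ρ' (i, j) = Function.update ρ q (some b) (i, j) :=
    fun j => sub_isSome hsub (hfull j)
  have hcnt : cnt ρ' i = m := cnt_full hfull
  have hf : fgt ρ' β i = β i := by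
    simp only [fgt, hcnt, if_pos (Nat.sub_le m 1)]
  rw [hf]
  rcases eq_or_ne i q.1 with rfl | hne
  · have hpar : par ρ' q.1 = xor b (par ρ q.1) := (par_congr hagree).trans (par_update hq b)
    rcases hblk with h | h
    · rw [hpar]; exact h
    · exfalso
      have h2 := cnt_mono hsub q.1
      rw [cnt_update_self hq b, hcnt] at h2
      omega
  · have hag2 : ∀ j, ρ' (i, j) = ρ (i, j) := by
      intro j
      rw [hagree j, Function.update_of_ne (fun h => hne (congrArg Prod.fst h))]
    have hfull2 : ∀ j, (ρ (i, j)).isSome := fun j => by rw [← hag2 j]; exact hfull j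
    rw [par_congr hag2]
    exact h1 i hne hfull2

lemma pen_fgt (ρ' : Fin n × Fin m → Option Bool) (β : Fin n → Option Bool) :
    pen ρ' (fgt ρ' β) = pen ρ' β := by
  unfold pen
  congr 1
  apply filter_congr
  intro i _
  constructor
  · rintro ⟨h, h2⟩
    refine ⟨h, ?_⟩
    simp only [fgt] at h2
    rwa [if_pos h] at h2
  · rintro ⟨h, h2⟩
    refine ⟨h, ?_⟩
    simp only [fgt]
    rw [if_pos h]
    exact h2

lemma pen_step_free {ρ ρ' : Fin n × Fin m → Option Bool} {q : Fin n × Fin m} {b : Bool}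
    (hsub : Sub ρ' (Function.update ρ q (some b))) (α : Fin n → Option Bool) :
    pen ρ' (fgt ρ' α) ≤ pen ρ α + 1 := by
  rw [pen_fgt]
  unfold pen
  have hsubset : (Finset.univ.filter fun i => m - 1 ≤ cnt ρ' i ∧ α i = none) ⊆
      insert q.1 (Finset.univ.filter fun i => m - 1 ≤ cnt ρ i ∧ α i = none) := by
    intro i hi
    simp only [mem_filter, mem_univ, true_and] at hi
    rcases eq_or_ne i q.1 with rfl | hne
    · exact mem_insert_self _ _
    · apply mem_insert_of_mem
      simp only [mem_filter, mem_univ, true_and]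
      have := (cnt_mono hsub i).trans (le_of_eq (cnt_update_ne (Ne.symm hne) _))
      exact ⟨le_trans hi.1 this, hi.2⟩
  exact le_trans (card_le_card hsubset) (card_insert_le _ _)

lemma pen_step_some {ρ ρ' : Fin n × Fin m → Option Bool} {q : Fin n × Fin m} {b : Bool}
    (hsub : Sub ρ' (Function.update ρ q (some b))) {α : Fin n → Option Bool} {c : Bool}
    (hα : α q.1 = some c) :
    pen ρ' (fgt ρ' α) ≤ pen ρ α := by
  rw [pen_fgt]
  unfold pen
  apply card_le_card
  intro i hi
  simp only [mem_filter, mem_univ, true_and] at hi ⊢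
  have hne : i ≠ q.1 := by
    rintro rfl; rw [hα] at hi; exact Option.some_ne_none c hi.2
  have := (cnt_mono hsub i).trans (le_of_eq (cnt_update_ne (Ne.symm hne) _))
  exact ⟨le_trans hi.1 this, hi.2⟩

lemma pen_step_forced {ρ ρ' : Fin n × Fin m → Option Bool} {q : Fin n × Fin m} {b : Bool}
    (hsub : Sub ρ' (Function.update ρ q (some b))) {α : Fin n → Option Bool}
    (hα : α q.1 = none) (hcnt : cnt ρ q.1 = m - 1) (c : Bool) :
    pen ρ' (fgt ρ' (Function.update α q.1 (some c))) + 1 ≤ pen ρ α := by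
  rw [pen_fgt]
  unfold pen
  have hmem : q.1 ∈ Finset.univ.filter fun i => m - 1 ≤ cnt ρ i ∧ α i = none := by
    simp only [mem_filter, mem_univ, true_and]
    exact ⟨le_of_eq hcnt.symm, hα⟩
  have hsubset : (Finset.univ.filter fun i =>
      m - 1 ≤ cnt ρ' i ∧ Function.update α q.1 (some c) i = none) ⊆
      (Finset.univ.filter fun i => m - 1 ≤ cnt ρ i ∧ α i = none).erase q.1 := by
    intro i hi
    simp only [mem_filter, mem_univ, true_and] at hi
    have hne : i ≠ q.1 := by
      rintro rfl
      rw [Function.update_self] at hi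
      exact Option.some_ne_none c hi.2
    rw [Function.update_of_ne hne] at hi
    rw [mem_erase]
    refine ⟨hne, ?_⟩
    simp only [mem_filter, mem_univ, true_and]
    have := (cnt_mono hsub i).trans (le_of_eq (cnt_update_ne (Ne.symm hne) _))
    exact ⟨le_trans hi.1 this, hi.2⟩
  have h1 := card_le_card hsubset
  rw [card_erase_of_mem hmem] at h1
  have h2 : 0 < (Finset.univ.filter fun i => m - 1 ≤ cnt ρ i ∧ α i = none).card :=
    card_pos.mpr ⟨q.1, hmem⟩
  omega

lemma card_isSome_eq_sum (ρ : Fin n × Fin m → Option Bool) :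
    (Finset.univ.filter fun v : Fin n × Fin m => (ρ v).isSome).card = ∑ i, cnt ρ i := by
  rw [Finset.card_filter]
  rw [show (Finset.univ : Finset (Fin n × Fin m)) = Finset.univ ×ˢ Finset.univ from
    (Finset.univ_product_univ).symm]
  rw [Finset.sum_product]
  apply Finset.sum_congr rfl
  intro i _
  rw [cnt, Finset.card_filter]

lemma width_core {ρ : Fin n × Fin m → Option Bool} {α : Fin n → Option Bool}
    (h2 : Inv2 ρ α) :
    (m - 1) * (Finset.univ.filter fun i => (α i).isSome).card ≤
      (Finset.univ.filter fun v : Fin n × Fin m => (ρ v).isSome).card := by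
  rw [card_isSome_eq_sum]
  calc (m - 1) * (Finset.univ.filter fun i => (α i).isSome).card
      = ∑ _i ∈ (Finset.univ.filter fun i => (α i).isSome), (m - 1) := by
        rw [sum_const, smul_eq_mul, mul_comm]
    _ ≤ ∑ i ∈ (Finset.univ.filter fun i => (α i).isSome), cnt ρ i := by
        apply sum_le_sum
        intro i hi
        exact h2 i (by simpa using (mem_filter.mp hi).2)
    _ ≤ ∑ i, cnt ρ i := sum_le_sum_of_subset (filter_subset _ _)

lemma leaf_complete (ρ : Fin n × Fin m → Option Bool) (α : Fin n → Option Bool)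
    (h1 : Inv1 ρ α) (z : Fin n → Bool) (hz : ∀ v b, α v = some b → z v = b) :
    ∃ y : Fin n × Fin m → Bool, (∀ v b, ρ v = some b → y v = b) ∧
      (fun i => decide ((Finset.univ.filter fun j : Fin m => y (i, j) = true).card % 2 = 1)) = z := by
  classical
  set S : Fin n → Finset (Fin m) := fun i => Finset.univ.filter fun j => ρ (i, j) = none
    with hS
  set y : Fin n × Fin m → Bool := fun p =>
    (ρ p).getD (if hp : (S p.1).Nonempty then
      (if p.2 = (S p.1).min' hp then xor (z p.1) (par ρ p.1) else false) else false) with hy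
  refine ⟨y, ?_, ?_⟩
  · intro v b hv
    simp [hy, hv]
  · funext i
    by_cases hne : (S i).Nonempty
    · set j0 := (S i).min' hne with hj0def
      have hj0 : ρ (i, j0) = none := by
        have hmem : j0 ∈ S i := (S i).min'_mem hne
        exact (mem_filter.mp hmem).2
      have hj0T : j0 ∉ Finset.univ.filter fun j : Fin m => ρ (i, j) = some true := by
        simp [hj0]
      have hyj : ∀ j : Fin m, ρ (i, j) = none →
          y (i, j) = (if j = j0 then xor (z i) (par ρ i) else false) := by
        intro j hρj
        simp only [hy, hρj, Option.getD_none, dif_pos hne, ← hj0def]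
      cases hc : xor (z i) (par ρ i)
      · have hset : (Finset.univ.filter fun j : Fin m => y (i, j) = true)
            = Finset.univ.filter fun j : Fin m => ρ (i, j) = some true := by
          ext j
          simp only [mem_filter, mem_univ, true_and]
          rcases hρj : ρ (i, j) with _ | b
          · rw [hyj j hρj, hc]
            simp
          · have : y (i, j) = b := by simp [hy, hρj]
            simp [this]
        rw [hset]
        have h : z i = par ρ i := by
          cases hzi : z i <;> cases hp : par ρ i <;> rw [hzi, hp] at hc <;> simp_all
        exact h.symm
      · have hset : (Finset.univ.filter fun j : Fin m => y (i, j) = true)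
            = insert j0 (Finset.univ.filter fun j : Fin m => ρ (i, j) = some true) := by
          ext j
          simp only [mem_filter, mem_univ, true_and, mem_insert]
          rcases hρj : ρ (i, j) with _ | b
          · rw [hyj j hρj, hc]
            simp [hρj]
          · have hjne : j ≠ j0 := by
              rintro rfl; rw [hj0] at hρj; exact absurd hρj (by simp)
            have : y (i, j) = b := by simp [hy, hρj]
            simp [this, hjne]
        rw [hset, card_insert_of_notMem hj0T, dec_succ]
        have h : z i = !(par ρ i) := by
          cases hzi : z i <;> cases hp : par ρ i <;> rw [hzi, hp] at hc <;> simp_all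
        exact h.symm
    · have hfull : ∀ j, (ρ (i, j)).isSome := by
        intro j
        by_contra h
        exact hne ⟨j, by simp [hS, Option.not_isSome_iff_eq_none.mp h]⟩
      have hset : (Finset.univ.filter fun j : Fin m => y (i, j) = true)
          = Finset.univ.filter fun j : Fin m => ρ (i, j) = some true := by
        ext j
        obtain ⟨b, hb⟩ := Option.isSome_iff_exists.mp (hfull j)
        have : y (i, j) = b := by simp [hy, hb]
        simp [this, hb]
      rw [hset]
      exact (hz i _ (h1 i hfull)).symm

lemma childOk_lift (t : DTree (Fin n × Fin m) O) (α : Fin n → Option Bool)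
    (q1 : Fin n) (c : Bool) :
    DTree.ChildOk α q1 c (lift t (fgt t.rho (Function.update α q1 (some c)))).rho := by
  constructor
  · rcases rho_lift t (fgt t.rho (Function.update α q1 (some c))) q1 with h | h
    · rcases fgt_cases t.rho (Function.update α q1 (some c)) q1 with h2 | h2
      · left; rw [h, h2, Function.update_self]
      · right; rw [h, h2]
    · right; exact h
  · intro v hv
    rcases rho_lift t (fgt t.rho (Function.update α q1 (some c))) v with h | h
    · rcases fgt_cases t.rho (Function.update α q1 (some c)) v with h2 | h2
      · left; rw [h, h2, Function.update_of_ne hv]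
      · right; rw [h, h2]
    · right; exact h

lemma mul_max_le {k a b W : ℕ} (h1 : k * a ≤ W) (h2 : k * b ≤ W) : k * max a b ≤ W := by
  rcases Nat.le_total a b with h | h
  · rwa [Nat.max_eq_right h]
  · rwa [Nat.max_eq_left h]

end Lift

namespace Lift
open Finset

variable {n m : ℕ} {O : Type}

theorem main (Rel : (Fin n → Bool) → O → Prop) (T : DTree (Fin n × Fin m) O) :
    ∀ α : Fin n → Option Bool,
    DTree.Ok (fun y o => Rel
      (fun i => decide
        ((Finset.univ.filter fun j : Fin m => y (i, j) = true).card % 2 = 1)) o) T →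
    Inv1 T.rho α → Inv2 T.rho α →
    DTree.Ok Rel (lift T α) ∧
    (m - 1) * (lift T α).width ≤ T.width ∧
    2 ^ (lift T α).depth ≤ 2 ^ pen T.rho α * T.size := by
  induction T with
  | leaf ρ o =>
    intro α hOk h1 h2
    refine ⟨?_, ?_, ?_⟩
    · intro z hz
      obtain ⟨y, hy1, hy2⟩ := leaf_complete ρ α h1 z hz
      have h3 : Rel (fun i => decide
          ((Finset.univ.filter fun j : Fin m => y (i, j) = true).card % 2 = 1)) o := hOk y hy1
      rwa [hy2] at h3
    · simp only [lift_leaf, DTree.width]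
      exact width_core h2
    · simp only [lift_leaf, DTree.depth, DTree.size]
      simpa using Nat.one_le_two_pow
  | node ρ q t0 t1 ih0 ih1 =>
    intro α hOk h1 h2
    obtain ⟨hq, hc0, hc1, hok0, hok1⟩ := hOk
    have hq' : ρ (q.1, q.2) = none := by rw [Prod.mk.eta]; exact hq
    have hqle : cnt ρ q.1 + 1 ≤ m := cnt_le_of_none hq'
    have hsub0 : Sub t0.rho (Function.update ρ q (some false)) := sub_childOk hc0
    have hsub1 : Sub t1.rho (Function.update ρ q (some true)) := sub_childOk hc1
    have h1' : ∀ i, i ≠ q.1 → (∀ j, (ρ (i, j)).isSome) → α i = some (par ρ i) :=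
      fun i _ h => h1 i h
    have hwid0 : t0.width ≤ (DTree.node ρ q t0 t1).width := by
      show t0.width ≤ max _ (max t0.width t1.width); omega
    have hwid1 : t1.width ≤ (DTree.node ρ q t0 t1).width := by
      show t1.width ≤ max _ (max t0.width t1.width); omega
    have hwidρ : (Finset.univ.filter fun v : Fin n × Fin m => (ρ v).isSome).card
        ≤ (DTree.node ρ q t0 t1).width := by
      show _ ≤ max ((Finset.univ.filter fun v : Fin n × Fin m => (ρ v).isSome).card) _
      omega
    rcases hα : α q.1 with _ | c
    · by_cases hcnt : cnt ρ q.1 = m - 1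
      · -- forced query
        rw [lift_node_none ρ t0 t1 hα, if_pos hcnt]
        have hupd : ∀ c : Bool, ∀ i, i ≠ q.1 → (∀ j, (ρ (i, j)).isSome) →
            Function.update α q.1 (some c) i = some (par ρ i) := by
          intro c i hne hf
          rw [Function.update_of_ne hne]
          exact h1 i hf
        cases hp : par ρ q.1
        · simp only [Bool.false_eq_true, if_false]
          obtain ⟨OL, WL, DL⟩ := ih0 (fgt t0.rho (Function.update α q.1 (some false))) hok0
            (inv1_step hq hsub0 _ (hupd false)
              (Or.inl (by simp [hp])))
            (inv2_fgt _ _)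
          obtain ⟨OR, WR, DR⟩ := ih1 (fgt t1.rho (Function.update α q.1 (some true))) hok1
            (inv1_step hq hsub1 _ (hupd true)
              (Or.inl (by simp [hp])))
            (inv2_fgt _ _)
          have hpL := pen_step_forced hsub0 hα hcnt false
          have hpR := pen_step_forced hsub1 hα hcnt true
          refine ⟨⟨hα, childOk_lift t0 α q.1 false, childOk_lift t1 α q.1 true, OL, OR⟩,
            ?_, ?_⟩
          · apply mul_max_le (le_trans (width_core h2) hwidρ)
            exact mul_max_le (le_trans WL hwid0) (le_trans WR hwid1)
          · show 2 ^ (1 + max _ _) ≤ 2 ^ pen ρ α * (1 + t0.size + t1.size)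
            have key : ∀ d p s : ℕ, 2 ^ d ≤ 2 ^ p * s → p + 1 ≤ pen ρ α →
                s ≤ t0.size + t1.size →
                2 ^ (1 + d) ≤ 2 ^ pen ρ α * (1 + t0.size + t1.size) := by
              intro d p s h hps hs
              calc 2 ^ (1 + d) = 2 * 2 ^ d := by rw [pow_add, pow_one]
                _ ≤ 2 * (2 ^ p * s) := Nat.mul_le_mul_left 2 h
                _ = 2 ^ (p + 1) * s := by ring
                _ ≤ 2 ^ pen ρ α * (1 + t0.size + t1.size) :=
                    Nat.mul_le_mul (Nat.pow_le_pow_right (by norm_num) hps) (by omega)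
            rcases Nat.le_total (lift t0 (fgt t0.rho (Function.update α q.1 (some false)))).depth
              (lift t1 (fgt t1.rho (Function.update α q.1 (some true)))).depth with h | h
            · rw [Nat.max_eq_right h]
              exact key _ _ _ DR hpR (by omega)
            · rw [Nat.max_eq_left h]
              exact key _ _ _ DL hpL (by omega)
        · simp only [if_true]
          obtain ⟨OL, WL, DL⟩ := ih1 (fgt t1.rho (Function.update α q.1 (some false))) hok1
            (inv1_step hq hsub1 _ (hupd false)
              (Or.inl (by simp [hp])))
            (inv2_fgt _ _)
          obtain ⟨OR, WR, DR⟩ := ih0 (fgt t0.rho (Function.update α q.1 (some true))) hok0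
            (inv1_step hq hsub0 _ (hupd true)
              (Or.inl (by simp [hp])))
            (inv2_fgt _ _)
          have hpL := pen_step_forced hsub1 hα hcnt false
          have hpR := pen_step_forced hsub0 hα hcnt true
          refine ⟨⟨hα, childOk_lift t1 α q.1 false, childOk_lift t0 α q.1 true, OL, OR⟩,
            ?_, ?_⟩
          · apply mul_max_le (le_trans (width_core h2) hwidρ)
            exact mul_max_le (le_trans WL hwid1) (le_trans WR hwid0)
          · show 2 ^ (1 + max _ _) ≤ 2 ^ pen ρ α * (1 + t0.size + t1.size)
            have key : ∀ d p s : ℕ, 2 ^ d ≤ 2 ^ p * s → p + 1 ≤ pen ρ α →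
                s ≤ t0.size + t1.size →
                2 ^ (1 + d) ≤ 2 ^ pen ρ α * (1 + t0.size + t1.size) := by
              intro d p s h hps hs
              calc 2 ^ (1 + d) = 2 * 2 ^ d := by rw [pow_add, pow_one]
                _ ≤ 2 * (2 ^ p * s) := Nat.mul_le_mul_left 2 h
                _ = 2 ^ (p + 1) * s := by ring
                _ ≤ 2 ^ pen ρ α * (1 + t0.size + t1.size) :=
                    Nat.mul_le_mul (Nat.pow_le_pow_right (by norm_num) hps) (by omega)
            rcases Nat.le_total (lift t1 (fgt t1.rho (Function.update α q.1 (some false)))).depth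
              (lift t0 (fgt t0.rho (Function.update α q.1 (some true)))).depth with h | h
            · rw [Nat.max_eq_right h]
              exact key _ _ _ DR hpR (by omega)
            · rw [Nat.max_eq_left h]
              exact key _ _ _ DL hpL (by omega)
      · -- free move
        have hfree : cnt ρ q.1 + 1 < m := by omega
        rw [lift_node_none ρ t0 t1 hα, if_neg hcnt]
        by_cases hsz : t0.size ≤ t1.size
        · rw [if_pos hsz]
          obtain ⟨O0, W0, D0⟩ := ih0 (fgt t0.rho α) hok0
            (inv1_step hq hsub0 α h1' (Or.inr hfree)) (inv2_fgt _ _)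
          refine ⟨O0, le_trans W0 hwid0, ?_⟩
          have hps := pen_step_free hsub0 α
          calc 2 ^ (lift t0 (fgt t0.rho α)).depth
              ≤ 2 ^ pen t0.rho (fgt t0.rho α) * t0.size := D0
            _ ≤ 2 ^ (pen ρ α + 1) * t0.size :=
                Nat.mul_le_mul_right _ (Nat.pow_le_pow_right (by norm_num) hps)
            _ = 2 ^ pen ρ α * (2 * t0.size) := by ring
            _ ≤ 2 ^ pen ρ α * (1 + t0.size + t1.size) :=
                Nat.mul_le_mul_left _ (by omega)
        · rw [if_neg hsz]
          obtain ⟨O1, W1, D1⟩ := ih1 (fgt t1.rho α) hok1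
            (inv1_step hq hsub1 α h1' (Or.inr hfree)) (inv2_fgt _ _)
          refine ⟨O1, le_trans W1 hwid1, ?_⟩
          have hps := pen_step_free hsub1 α
          calc 2 ^ (lift t1 (fgt t1.rho α)).depth
              ≤ 2 ^ pen t1.rho (fgt t1.rho α) * t1.size := D1
            _ ≤ 2 ^ (pen ρ α + 1) * t1.size :=
                Nat.mul_le_mul_right _ (Nat.pow_le_pow_right (by norm_num) hps)
            _ = 2 ^ pen ρ α * (2 * t1.size) := by ring
            _ ≤ 2 ^ pen ρ α * (1 + t0.size + t1.size) :=
                Nat.mul_le_mul_left _ (by omega)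
    · -- α q.1 = some c
      rw [lift_node_some ρ t0 t1 hα]
      cases hb : xor c (par ρ q.1)
      · simp only [Bool.false_eq_true, if_false]
        have hcp : c = par ρ q.1 := by
          cases c <;> cases hpp : par ρ q.1 <;> rw [hpp] at hb <;> simp_all
        obtain ⟨O0, W0, D0⟩ := ih0 (fgt t0.rho α) hok0
          (inv1_step hq hsub0 α h1'
            (Or.inl (by rw [Bool.false_xor, hα, hcp]))) (inv2_fgt _ _)
        refine ⟨O0, le_trans W0 hwid0, ?_⟩
        calc 2 ^ (lift t0 (fgt t0.rho α)).depth
            ≤ 2 ^ pen t0.rho (fgt t0.rho α) * t0.size := D0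
          _ ≤ 2 ^ pen ρ α * (1 + t0.size + t1.size) :=
              Nat.mul_le_mul (Nat.pow_le_pow_right (by norm_num) (pen_step_some hsub0 hα))
                (by omega)
      · simp only [if_true]
        have hcp : c = !(par ρ q.1) := by
          cases c <;> cases hpp : par ρ q.1 <;> rw [hpp] at hb <;> simp_all
        obtain ⟨O1, W1, D1⟩ := ih1 (fgt t1.rho α) hok1
          (inv1_step hq hsub1 α h1'
            (Or.inl (by rw [Bool.true_xor, hα, hcp]))) (inv2_fgt _ _)
        refine ⟨O1, le_trans W1 hwid1, ?_⟩
        calc 2 ^ (lift t1 (fgt t1.rho α)).depth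
            ≤ 2 ^ pen t1.rho (fgt t1.rho α) * t1.size := D1
          _ ≤ 2 ^ pen ρ α * (1 + t0.size + t1.size) :=
              Nat.mul_le_mul (Nat.pow_le_pow_right (by norm_num) (pen_step_some hsub1 hα))
                (by omega)

lemma size_pos (T : DTree (Fin n × Fin m) O) : 0 < T.size := by
  cases T <;> simp [DTree.size]

end Lift



/-- lifting for decision trees: if the `XOR_m`-composed search problem
`ℛ ∘ XOR_m^n` has a decision tree of width `w` and size `s`, then `ℛ` has a decision
tree of width at most `w/(m-1)` and depth at most `log₂ s`. -/
theorem stmt_11 (n m : ℕ) (hm : 2 ≤ m) (O : Type)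
    (Rel : (Fin n → Bool) → O → Prop) (htotal : ∀ x, ∃ o, Rel x o)
    (T : DTree (Fin n × Fin m) O) (w s : ℕ)
    (hT : DTree.Solves
      (fun y o => Rel
        (fun i => decide
          ((Finset.univ.filter fun j : Fin m => y (i, j) = true).card % 2 = 1)) o) T)
    (hw : T.width ≤ w) (hs : T.size = s) :
    ∃ T' : DTree (Fin n) O, DTree.Solves Rel T' ∧
      (T'.width : ℝ) ≤ (w : ℝ) / ((m : ℝ) - 1) ∧
      (T'.depth : ℝ) ≤ Real.logb 2 s := by
  obtain ⟨hOk, hrho⟩ := hT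
  have h1 : Lift.Inv1 T.rho (fun _ => none) := by
    intro i hfull
    exfalso
    have := hfull ⟨0, by omega⟩
    rw [hrho] at this
    simp at this
  have h2 : Lift.Inv2 T.rho (fun _ => none) := by
    intro i h
    simp at h
  obtain ⟨hOkL, hW, hD⟩ := Lift.main Rel T (fun _ => none) hOk h1 h2
  refine ⟨Lift.lift T (fun _ => none), ⟨hOkL, ?_⟩, ?_, ?_⟩
  · funext v
    rcases Lift.rho_lift T (fun _ => none) v with h | h <;> exact h
  · have hWw : (m - 1) * (Lift.lift T (fun _ => none)).width ≤ w := le_trans hW hw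
    have hc : ((m : ℝ) - 1) = ((m - 1 : ℕ) : ℝ) := by
      rw [Nat.cast_sub (by omega)]; simp
    rw [hc, le_div_iff₀ (by exact_mod_cast (by omega : 0 < m - 1))]
    have hcast : (((m - 1) * (Lift.lift T (fun _ => none)).width : ℕ) : ℝ) ≤ (w : ℝ) :=
      Nat.cast_le.mpr hWw
    rw [Nat.cast_mul] at hcast
    rw [mul_comm] at hcast
    exact hcast
  · have hpen : Lift.pen T.rho (fun _ => none) = 0 := by
      unfold Lift.pen
      rw [Finset.card_eq_zero, Finset.filter_eq_empty_iff]
      rintro i _ ⟨hle, _⟩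
      have hcnt0 : Lift.cnt T.rho i = 0 := by
        unfold Lift.cnt
        rw [hrho]
        simp
      omega
    rw [hpen, pow_zero, one_mul] at hD
    rw [← hs]
    have hspos : (0 : ℝ) < (T.size : ℝ) := by exact_mod_cast Lift.size_pos T
    rw [Real.le_logb_iff_rpow_le (by norm_num) hspos, Real.rpow_natCast]
    exact_mod_cast hD
end

section
/- Let T ⊆ A × B be a triangle, i.e., there exist functions a_T : A → ℝ and b_T : B → ℝ with T = {(x,y) : a_T(x) < b_T(y)}. Let R = R^X × R^Y ⊆ A × B be any finite nonempty rectangle, and let T₁ ⊆ A × B also be a triangle. If R ⊆ T ⊆ T₁ ∪ T₂ for some set T₂, then at least one of the following holds: (i) T₁ contains a sub-rectangle Q = Q^X × Q^Y ⊆ R with |Q^X| ≥ |R^X|/2 and |Q^Y| ≥ |R^Y|/2, or (ii) T₂ contains such a sub-rectangle Q ⊆ R with |Q^X| ≥ |R^X|/2 and |Q^Y| ≥ |R^Y|/2. -/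
lemma median_exists {α : Type} (s : Finset α) (hs : s.Nonempty) (f : α → ℝ) :
    ∃ c ∈ s, s.card ≤ 2 * (s.filter (fun x => f x ≤ f c)).card ∧
      s.card ≤ 2 * (s.filter (fun x => f c ≤ f x)).card := by
  classical
  set t := s.filter (fun x => s.card ≤ 2 * (s.filter (fun y => f y ≤ f x)).card) with ht
  have htne : t.Nonempty := by
    obtain ⟨m, hm, hmax⟩ := s.exists_max_image f hs
    refine ⟨m, Finset.mem_filter.mpr ⟨hm, ?_⟩⟩
    have : s.filter (fun y => f y ≤ f m) = s := by
      apply Finset.filter_true_of_mem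
      intro x hx; exact hmax x hx
    rw [this]; omega
  obtain ⟨c, hc, hcmin⟩ := t.exists_min_image f htne
  rw [ht, Finset.mem_filter] at hc
  refine ⟨c, hc.1, hc.2, ?_⟩
  by_contra h
  push_neg at h
  have hsplit : (s.filter (fun x => f x < f c)).card + (s.filter (fun x => f c ≤ f x)).card = s.card := by
    have : (s.filter (fun x => f c ≤ f x)) = s.filter (fun x => ¬ f x < f c) := by
      apply Finset.filter_congr; intro x _; simp [not_lt]
    rw [this, Finset.card_filter_add_card_filter_not]
  have hlt : s.card < 2 * (s.filter (fun x => f x < f c)).card := by omega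
  have hltne : (s.filter (fun x => f x < f c)).Nonempty := by
    rw [← Finset.card_pos]; omega
  obtain ⟨d, hd, hdmax⟩ := (s.filter (fun x => f x < f c)).exists_max_image f hltne
  rw [Finset.mem_filter] at hd
  have hsub : s.filter (fun x => f x < f c) ⊆ s.filter (fun x => f x ≤ f d) := by
    intro x hx
    rw [Finset.mem_filter] at hx ⊢
    exact ⟨hx.1, hdmax x (Finset.mem_filter.mpr hx)⟩
  have hdt : d ∈ t := by
    rw [ht, Finset.mem_filter]
    refine ⟨hd.1, ?_⟩
    have := Finset.card_le_card hsub
    omega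
  have := hcmin d hdt
  exact absurd hd.2 (not_lt.mpr this)

/-- quadrant lemma: let `T` and `T₁` be triangles in `A × B` (sets cut
out by real row- and column-labels), let `R = R^X × R^Y` be a finite nonempty rectangle
with `R ⊆ T ⊆ T₁ ∪ T₂`. Then `T₁` or `T₂` contains a sub-rectangle `Q = Q^X × Q^Y ⊆ R`
with `|Q^X| ≥ |R^X|/2` and `|Q^Y| ≥ |R^Y|/2`. -/
theorem stmt_17 (A B : Type) (T T1 T2 : Set (A × B))
    (hT : ∃ (aT : A → ℝ) (bT : B → ℝ), T = {p : A × B | aT p.1 < bT p.2})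
    (hT1 : ∃ (a1 : A → ℝ) (b1 : B → ℝ), T1 = {p : A × B | a1 p.1 < b1 p.2})
    (RX : Finset A) (RY : Finset B) (hRX : RX.Nonempty) (hRY : RY.Nonempty)
    (hRT : ∀ p : A × B, p.1 ∈ RX → p.2 ∈ RY → p ∈ T)
    (hTcov : T ⊆ T1 ∪ T2) :
    ∃ (QX : Finset A) (QY : Finset B), QX ⊆ RX ∧ QY ⊆ RY ∧
      RX.card ≤ 2 * QX.card ∧ RY.card ≤ 2 * QY.card ∧
      ((∀ p : A × B, p.1 ∈ QX → p.2 ∈ QY → p ∈ T1) ∨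
       (∀ p : A × B, p.1 ∈ QX → p.2 ∈ QY → p ∈ T2)) := by
  classical
  obtain ⟨a1, b1, hT1eq⟩ := hT1
  obtain ⟨x0, hx0, hx0le, hx0ge⟩ := median_exists RX hRX a1
  obtain ⟨y0, hy0, hy0le, hy0ge⟩ := median_exists RY hRY b1
  by_cases hp : a1 x0 < b1 y0
  · -- top-left quadrant in T1
    refine ⟨RX.filter (fun x => a1 x ≤ a1 x0), RY.filter (fun y => b1 y0 ≤ b1 y),
      Finset.filter_subset _ _, Finset.filter_subset _ _, hx0le, hy0ge, Or.inl ?_⟩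
    intro p hpx hpy
    rw [Finset.mem_filter] at hpx hpy
    rw [hT1eq]
    exact lt_of_le_of_lt hpx.2 (lt_of_lt_of_le hp hpy.2)
  · -- bottom-right quadrant in T2
    push_neg at hp
    refine ⟨RX.filter (fun x => a1 x0 ≤ a1 x), RY.filter (fun y => b1 y ≤ b1 y0),
      Finset.filter_subset _ _, Finset.filter_subset _ _, hx0ge, hy0le, Or.inr ?_⟩
    intro p hpx hpy
    rw [Finset.mem_filter] at hpx hpy
    have hpT : p ∈ T := hRT p hpx.1 hpy.1
    rcases hTcov hpT with h1 | h2
    · rw [hT1eq] at h1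
      exact absurd h1 (not_lt.mpr (le_trans (le_trans hpy.2 hp) hpx.2))
    · exact h2
end

section
/- Let X ⊆ [m]^n be finite and nonempty with density |X|/m^n ≥ m^{-(1-δ)w} for some δ ∈ (0,1) and integer 0 ≤ w ≤ n. Suppose I ⊆ [n] is a maximal set of coordinates on which X is not δ-dense, i.e., there exists α : I → [m] with |{x ∈ X : x_I = α}| ≥ |X| · m^{-δ|I|}, and no strictly larger J ⊇ I admits such a witness (and I = ∅ if no coordinate set admits a witness). Fix such a witness α. Then: (a) |I| ≤ w, and (b) the set X_α = {x ∈ X : x_I = α} satisfies that for every nonempty J ⊆ [n] ∖ I and every β : J → [m], |{x ∈ X_α : x_J = β}| < |X_α| · m^{-δ|J|}. -/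
lemma card_fix_le (n m : ℕ) (X : Finset (Fin n → Fin m)) (I : Finset (Fin n))
    (α : Fin n → Fin m) :
    (X.filter fun x => ∀ i ∈ I, x i = α i).card ≤ m ^ (n - I.card) := by
  classical
  have h : (X.filter fun x => ∀ i ∈ I, x i = α i).card ≤
      (Finset.univ : Finset ({i : Fin n // i ∉ I} → Fin m)).card := by
    apply Finset.card_le_card_of_injOn (fun x i => x i.1)
    · intro x _; exact Finset.mem_univ _
    · intro x hx y hy hxy
      simp only [Finset.mem_coe, Finset.mem_filter] at hx hy
      funext i
      by_cases hi : i ∈ I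
      · rw [hx.2 i hi, hy.2 i hi]
      · exact congrFun hxy ⟨i, hi⟩
  have hcard : (Finset.univ : Finset ({i : Fin n // i ∉ I} → Fin m)).card
      = m ^ (n - I.card) := by
    rw [Finset.card_univ, Fintype.card_fun]
    simp [Fintype.card_subtype_compl, Fintype.card_coe]
  exact hcard ▸ h


/-- suppose `X ⊆ [m]^n` has density at least `m^{-(1-δ)w}`, `(I, α)` is a
witness that `X` is not `δ`-dense on `I` (i.e. the pattern `α` on `I` is taken by at
least an `m^{-δ|I|}` fraction of `X`), and `I` is maximal: no strict superset `J ⊇ I`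
admits such a witness. Then (a) `|I| ≤ w`, and (b) `X_α = {x ∈ X : x_I = α}` is
`α`-dense: every pattern `β` on a nonempty `J ⊆ [n] ∖ I` is taken by less than an
`m^{-δ|J|}` fraction of `X_α`. -/
theorem stmt_18 (n m w : ℕ) (hm : 2 ≤ m) (hw : w ≤ n)
    (δ : ℝ) (hδ0 : 0 < δ) (hδ1 : δ < 1)
    (X : Finset (Fin n → Fin m)) (hX : X.Nonempty)
    (hdens : ((m : ℝ) ^ n) * (m : ℝ) ^ (-((1 - δ) * (w : ℝ))) ≤ (X.card : ℝ))
    (I : Finset (Fin n)) (α : Fin n → Fin m)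
    (hwit : (X.card : ℝ) * (m : ℝ) ^ (-(δ * (I.card : ℝ)))
        ≤ ((X.filter fun x => ∀ i ∈ I, x i = α i).card : ℝ))
    (hmax : ∀ J : Finset (Fin n), I ⊂ J → ∀ β : Fin n → Fin m,
        ¬ ((X.card : ℝ) * (m : ℝ) ^ (-(δ * (J.card : ℝ)))
            ≤ ((X.filter fun x => ∀ i ∈ J, x i = β i).card : ℝ))) :
    I.card ≤ w ∧
      ∀ J : Finset (Fin n), J.Nonempty → Disjoint J I → ∀ β : Fin n → Fin m,
        (((X.filter fun x => ∀ i ∈ I, x i = α i).filter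
            fun x => ∀ i ∈ J, x i = β i).card : ℝ)
          < ((X.filter fun x => ∀ i ∈ I, x i = α i).card : ℝ)
              * (m : ℝ) ^ (-(δ * (J.card : ℝ))) := by
  classical
  have hm1 : (1:ℝ) < m := by exact_mod_cast lt_of_lt_of_le one_lt_two hm
  have hm0 : (0:ℝ) < m := lt_trans one_pos hm1
  have hIn : I.card ≤ n := by simpa using Finset.card_le_univ I
  constructor
  · -- part (a)
    have hub : ((X.filter fun x => ∀ i ∈ I, x i = α i).card : ℝ)
        ≤ (m:ℝ) ^ ((n:ℝ) - I.card) := by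
      have h1 := card_fix_le n m X I α
      have h2 : ((X.filter fun x => ∀ i ∈ I, x i = α i).card : ℝ)
          ≤ (m:ℝ) ^ (n - I.card : ℕ) := by exact_mod_cast h1
      calc ((X.filter fun x => ∀ i ∈ I, x i = α i).card : ℝ)
          ≤ (m:ℝ) ^ (n - I.card : ℕ) := h2
        _ = (m:ℝ) ^ (((n - I.card : ℕ) : ℝ)) := (Real.rpow_natCast _ _).symm
        _ = (m:ℝ) ^ ((n:ℝ) - I.card) := by rw [Nat.cast_sub hIn]
    have hlb : (m:ℝ) ^ ((n:ℝ) - (1-δ)*w - δ*I.card)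
        ≤ ((X.filter fun x => ∀ i ∈ I, x i = α i).card : ℝ) := by
      have hpos : (0:ℝ) < (m:ℝ) ^ (-(δ * (I.card:ℝ))) := Real.rpow_pos_of_pos hm0 _
      have h3 : ((m : ℝ) ^ n * (m : ℝ) ^ (-((1 - δ) * (w : ℝ))))
            * (m:ℝ) ^ (-(δ * (I.card:ℝ)))
          ≤ (X.card : ℝ) * (m:ℝ) ^ (-(δ * (I.card:ℝ))) :=
        mul_le_mul_of_nonneg_right hdens hpos.le
      calc (m:ℝ) ^ ((n:ℝ) - (1-δ)*w - δ*I.card)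
          = ((m : ℝ) ^ n * (m : ℝ) ^ (-((1 - δ) * (w : ℝ))))
              * (m:ℝ) ^ (-(δ * (I.card:ℝ))) := by
            rw [← Real.rpow_natCast (m:ℝ) n, ← Real.rpow_add hm0, ← Real.rpow_add hm0]
            ring_nf
        _ ≤ (X.card : ℝ) * (m:ℝ) ^ (-(δ * (I.card:ℝ))) := h3
        _ ≤ _ := hwit
    have hexp : (n:ℝ) - (1-δ)*w - δ*I.card ≤ (n:ℝ) - I.card :=
      (Real.rpow_le_rpow_left_iff hm1).mp (hlb.trans hub)
    have : (I.card : ℝ) ≤ (w : ℝ) := by nlinarith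
    exact_mod_cast this
  · -- part (b)
    intro J hJ hdisj β
    set K := I ∪ J with hK
    set γ : Fin n → Fin m := fun i => if i ∈ I then α i else β i with hγ
    have hss : I ⊂ K := by
      obtain ⟨j, hj⟩ := hJ
      refine Finset.ssubset_iff_of_subset Finset.subset_union_left |>.mpr
        ⟨j, Finset.mem_union_right _ hj, Finset.disjoint_left.mp hdisj hj⟩
    have hfe : ((X.filter fun x => ∀ i ∈ I, x i = α i).filter
          fun x => ∀ i ∈ J, x i = β i)
        = X.filter fun x => ∀ i ∈ K, x i = γ i := by
      rw [Finset.filter_filter]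
      apply Finset.filter_congr
      intro x _
      simp only [hγ, hK]
      constructor
      · rintro ⟨h1, h2⟩ i hi
        rcases Finset.mem_union.mp hi with hiI | hiJ
        · simp [hiI, h1 i hiI]
        · have hiI : i ∉ I := Finset.disjoint_left.mp hdisj hiJ
          simp [hiI, h2 i hiJ]
      · intro h
        refine ⟨fun i hi => ?_, fun i hi => ?_⟩
        · have := h i (Finset.mem_union_left _ hi)
          simpa [hi] using this
        · have hiI : i ∉ I := Finset.disjoint_left.mp hdisj hi
          have := h i (Finset.mem_union_right _ hi)
          simpa [hiI] using this
    have hKcard : (K.card : ℝ) = I.card + J.card := by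
      rw [hK, Finset.card_union_of_disjoint hdisj.symm]
      push_cast; ring
    have hlt : ((X.filter fun x => ∀ i ∈ K, x i = γ i).card : ℝ)
        < (X.card : ℝ) * (m:ℝ) ^ (-(δ * (K.card:ℝ))) :=
      lt_of_not_ge (hmax K hss γ)
    have hsplit : (m:ℝ) ^ (-(δ * (K.card:ℝ)))
        = (m:ℝ) ^ (-(δ * (I.card:ℝ))) * (m:ℝ) ^ (-(δ * (J.card:ℝ))) := by
      rw [← Real.rpow_add hm0, hKcard]; ring_nf
    have hpos : (0:ℝ) < (m:ℝ) ^ (-(δ * (J.card:ℝ))) := Real.rpow_pos_of_pos hm0 _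
    calc (((X.filter fun x => ∀ i ∈ I, x i = α i).filter
          fun x => ∀ i ∈ J, x i = β i).card : ℝ)
        = ((X.filter fun x => ∀ i ∈ K, x i = γ i).card : ℝ) := by rw [hfe]
      _ < (X.card : ℝ) * (m:ℝ) ^ (-(δ * (K.card:ℝ))) := hlt
      _ = ((X.card : ℝ) * (m:ℝ) ^ (-(δ * (I.card:ℝ))))
            * (m:ℝ) ^ (-(δ * (J.card:ℝ))) := by rw [hsplit]; ring
      _ ≤ ((X.filter fun x => ∀ i ∈ I, x i = α i).card : ℝ)
            * (m:ℝ) ^ (-(δ * (J.card:ℝ))) :=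
        mul_le_mul_of_nonneg_right hwit hpos.le
end
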